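/- arXiv:1906.03827 — 5 statements merged into one kernel-verified Lean document; each statement's English description precedes it below -/
import Mathlib

section
/- Let n ≥ 1 and let μ, ν ∈ ℝ be such that μ + ν ≥ n − 2 and μ ≤ n. Then the integral operator Tf(x) = ∫_{ℝ^n} K(x,y) f(y) dy with kernel K(x,y) = e^{−|x|^2+|y|^2} |x|^{−μ} (1+|x|)^{−ν} is of weak type (1,1) with respect to γ_{-1}. -/
open MeasureTheory Real Filter Set

noncomputable def gaussM (n : ℕ) : Measure (EuclideanSpace ℝ (Fin n)) :=
  volume.withDensity fun x => ENNReal.ofReal (Real.pi ^ ((n : ℝ) / 2) * Real.exp (‖x‖ ^ 2))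

noncomputable def hermiteH (k : ℕ) (s : ℝ) : ℝ :=
  (-1 : ℝ) ^ k * Real.exp (s ^ 2) * iteratedDeriv k (fun t => Real.exp (-t ^ 2)) s

noncomputable def rieszKernel {n : ℕ} (α : Fin n → ℕ) (x y : EuclideanSpace ℝ (Fin n)) : ℝ :=
  ((-1 : ℝ) ^ (∑ j, α j) / (Real.pi ^ ((n : ℝ) / 2) * Real.Gamma ((∑ j, α j : ℕ) / 2 : ℝ))) *
    ∫ r in Set.Ioo (0 : ℝ) 1,
      r ^ (n - 1) * (-Real.log r) ^ (((∑ j, α j : ℕ) : ℝ) / 2 - 1) *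
        (1 - r ^ 2) ^ (-(((n : ℝ) + ((∑ j, α j : ℕ) : ℝ)) / 2)) *
        (∏ j, hermiteH (α j) ((x j - r * y j) / Real.sqrt (1 - r ^ 2))) *
        Real.exp (-‖x - r • y‖ ^ 2 / (1 - r ^ 2))

noncomputable def projPar {n : ℕ} (x y : EuclideanSpace ℝ (Fin n)) : EuclideanSpace ℝ (Fin n) :=
  (inner ℝ y x / ‖x‖ ^ 2 : ℝ) • x

def Nset (n : ℕ) (δ : ℝ) : Set (EuclideanSpace ℝ (Fin n) × EuclideanSpace ℝ (Fin n)) :=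
  {p | ‖p.1 - p.2‖ ≤ δ / (1 + ‖p.1‖ + ‖p.2‖)}

def WeakType11 {n : ℕ} (K : EuclideanSpace ℝ (Fin n) → EuclideanSpace ℝ (Fin n) → ℝ) : Prop :=
  ∃ C : ℝ, ∀ f : EuclideanSpace ℝ (Fin n) → ℝ, Integrable f (gaussM n) →
    ∀ s : ℝ, 0 < s →
      gaussM n {x | s < |∫ y, K x y * f y|} ≤
        ENNReal.ofReal (C / s * ∫ y, |f y| ∂(gaussM n))

open scoped ENNReal NNReal

set_option maxHeartbeats 1000000

lemma self_le_exp_half_sq (r : ℝ) : r ≤ Real.exp (r ^ 2 / 2) := by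
  calc r ≤ (r - 1) + 1 := le_of_eq (by ring)
    _ ≤ Real.exp (r - 1) := Real.add_one_le_exp _
    _ ≤ Real.exp (r ^ 2 / 2) := Real.exp_le_exp.2 (by nlinarith)

lemma one_le_phi (n : ℕ) (hn : 1 ≤ n) (S : ℝ) (hS : 1 ≤ S) :
    1 ≤ Real.exp (S ^ 2) * S ^ ((n:ℝ) - 2) := by
  have hS0 : (0:ℝ) < S := by linarith
  have h1 : S ^ ((-1:ℝ)) ≤ S ^ ((n:ℝ) - 2) := by
    apply Real.rpow_le_rpow_of_exponent_le hS
    have : (1:ℝ) ≤ (n:ℝ) := by exact_mod_cast hn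
    linarith
  have h2 : (Real.exp (S^2/2))⁻¹ ≤ S ^ ((-1:ℝ)) := by
    rw [Real.rpow_neg_one]
    exact inv_anti₀ hS0 (self_le_exp_half_sq S)
  have h3 : (Real.exp (S^2/2))⁻¹ ≤ S ^ ((n:ℝ)-2) := le_trans h2 h1
  have h4 := mul_le_mul_of_nonneg_left h3 (Real.exp_pos (S^2)).le
  have h5 : (1:ℝ) ≤ Real.exp (S^2) * (Real.exp (S^2/2))⁻¹ := by
    rw [← Real.exp_neg, ← Real.exp_add]
    rw [show S^2 + -(S^2/2) = S^2/2 by ring]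
    exact Real.one_le_exp (by positivity)
  linarith


lemma ftc1 (n : ℕ) (hn : 1 ≤ n) (S : ℝ) (hS : 1 ≤ S) :
    ∫ r in Ioc (1:ℝ) S, r ^ (n - 1) * Real.exp (r ^ 2) ≤
      Real.exp (S ^ 2) * S ^ ((n:ℝ) - 2) := by
  set φ : ℝ → ℝ := fun r => Real.exp (r ^ 2) * r ^ ((n:ℝ) - 2) with hφ
  set ψ : ℝ → ℝ := fun r =>
    Real.exp (r ^ 2) * (2 * r * r ^ ((n:ℝ) - 2) + ((n:ℝ) - 2) * r ^ ((n:ℝ) - 3)) with hψ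
  have hderiv : ∀ r ∈ Icc (1:ℝ) S, HasDerivAt φ (ψ r) r := by
    intro r hr
    have hr0 : r ≠ 0 := by nlinarith [hr.1]
    have h1 : HasDerivAt (fun r : ℝ => Real.exp (r ^ 2)) (Real.exp (r ^ 2) * (2 * r)) r := by
      have : HasDerivAt (fun r : ℝ => r ^ 2) (2 * r) r := by
        simpa using hasDerivAt_pow 2 r
      exact (Real.hasDerivAt_exp (r ^ 2)).comp r this
    have h2 : HasDerivAt (fun r : ℝ => r ^ ((n:ℝ) - 2)) (((n:ℝ) - 2) * r ^ ((n:ℝ) - 2 - 1)) r :=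
      Real.hasDerivAt_rpow_const (Or.inl hr0)
    have := h1.mul h2
    refine this.congr_deriv ?_
    simp only [hψ]
    rw [show (n:ℝ) - 2 - 1 = (n:ℝ) - 3 by ring]
    ring
  have hψcont : ContinuousOn ψ (Icc 1 S) := by
    apply ContinuousOn.mul (Continuous.continuousOn (by continuity))
    apply ContinuousOn.add
    · apply ContinuousOn.mul (Continuous.continuousOn (by continuity))
      exact ContinuousOn.rpow_const continuousOn_id (fun x hx => Or.inl (by nlinarith [hx.1]))
    · exact ContinuousOn.mul continuousOn_const
        (ContinuousOn.rpow_const continuousOn_id (fun x hx => Or.inl (by nlinarith [hx.1])))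
  have hψint : IntervalIntegrable ψ volume 1 S := by
    apply ContinuousOn.intervalIntegrable
    rwa [uIcc_of_le hS]
  have heq : ∫ r in (1:ℝ)..S, ψ r = φ S - φ 1 :=
    intervalIntegral.integral_eq_sub_of_hasDerivAt (fun r hr => hderiv r (by rwa [uIcc_of_le hS] at hr)) hψint
  have hle : ∫ r in (1:ℝ)..S, r ^ (n-1) * Real.exp (r ^ 2) ≤ ∫ r in (1:ℝ)..S, ψ r := by
    apply intervalIntegral.integral_mono_on hS
    · apply ContinuousOn.intervalIntegrable
      exact Continuous.continuousOn (by continuity)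
    · exact hψint
    · intro r hr
      have hr1 : (1:ℝ) ≤ r := hr.1
      have hr0 : (0:ℝ) < r := by linarith
      have hnat : (r:ℝ) ^ (n-1) = r ^ ((n:ℝ) - 1) := by
        rw [← Real.rpow_natCast r (n-1)]
        congr 1
        push_cast [Nat.cast_sub hn]
        ring
      rw [hnat, hψ]
      have e1 : r * r ^ ((n:ℝ) - 2) = r ^ ((n:ℝ) - 1) := by
        conv_rhs => rw [show (n:ℝ)-1 = 1 + ((n:ℝ)-2) by ring, Real.rpow_add hr0, Real.rpow_one]
      have e2 : r ^ ((n:ℝ) - 1) = r ^ ((n:ℝ) - 3) * r ^ 2 := by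
        rw [← Real.rpow_two, ← Real.rpow_add hr0]; ring_nf
      have e3 : (0:ℝ) ≤ r ^ ((n:ℝ) - 3) := (Real.rpow_pos_of_pos hr0 _).le
      have hn1 : (1:ℝ) ≤ (n:ℝ) := by exact_mod_cast hn
      have key : 0 ≤ r ^ ((n:ℝ)-3) * r ^ 2 + ((n:ℝ) - 2) * r ^ ((n:ℝ)-3) := by
        nlinarith [mul_le_mul_of_nonneg_left (show (1:ℝ) ≤ r^2 by nlinarith) e3]
      have e4 : 2 * r * r ^ ((n:ℝ)-2) = 2 * r ^ ((n:ℝ)-1) := by rw [mul_assoc, e1]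
      show r ^ ((n:ℝ)-1) * Real.exp (r^2) ≤ Real.exp (r^2) * (2*r*r^((n:ℝ)-2) + ((n:ℝ)-2)*r^((n:ℝ)-3))
      rw [e4]
      nlinarith [mul_le_mul_of_nonneg_left key (Real.exp_pos (r^2)).le, e2,
        Real.exp_pos (r^2)]
  have hIoc : ∫ r in Ioc (1:ℝ) S, r ^ (n-1) * Real.exp (r ^ 2) = ∫ r in (1:ℝ)..S, r ^ (n-1) * Real.exp (r ^ 2) := by
    rw [intervalIntegral.integral_of_le hS]
  have hφ1 : 0 ≤ φ 1 := by positivity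
  calc ∫ r in Ioc (1:ℝ) S, r ^ (n-1) * Real.exp (r ^ 2) ≤ φ S - φ 1 := by
        rw [hIoc]; exact hle.trans (le_of_eq heq)
    _ ≤ φ S := by linarith
    _ = Real.exp (S ^ 2) * S ^ ((n:ℝ) - 2) := rfl


lemma ball_int (n : ℕ) (hn : 1 ≤ n) (S : ℝ) (hS : 1 ≤ S) :
    ∫ x : EuclideanSpace ℝ (Fin n) in Metric.closedBall 0 S, Real.exp (‖x‖ ^ 2) ≤
      (n * ((volume : Measure (EuclideanSpace ℝ (Fin n))) (Metric.ball 0 1)).toReal * (Real.exp 1 + 1))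
        * (Real.exp (S ^ 2) * S ^ ((n:ℝ) - 2)) := by
  haveI : Nontrivial (EuclideanSpace ℝ (Fin n)) := by
    refine ⟨EuclideanSpace.single ⟨0, hn⟩ 1, 0, ?_⟩
    intro h; have := congrArg (fun v : EuclideanSpace ℝ (Fin n) => v ⟨0, hn⟩) h; simp at this
  set F : ℝ → ℝ := fun r => if r ≤ S then Real.exp (r ^ 2) else 0 with hF
  have step1 : ∫ x : EuclideanSpace ℝ (Fin n) in Metric.closedBall 0 S, Real.exp (‖x‖ ^ 2) =
      ∫ x : EuclideanSpace ℝ (Fin n), F ‖x‖ := by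
    rw [← integral_indicator (measurableSet_closedBall)]
    congr 1
    funext x
    simp only [indicator, mem_closedBall_iff_norm, hF, sub_zero]
  have step2 : ∫ x : EuclideanSpace ℝ (Fin n), F ‖x‖ =
      n • ((volume : Measure (EuclideanSpace ℝ (Fin n))) (Metric.ball 0 1)).toReal •
        ∫ y in Ioi (0:ℝ), y ^ (n - 1) • F y := by
    have := integral_fun_norm_addHaar (volume : Measure (EuclideanSpace ℝ (Fin n))) F
    rwa [finrank_euclideanSpace_fin] at this
  have step3 : ∫ y in Ioi (0:ℝ), y ^ (n - 1) • F y =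
      ∫ y in Ioc (0:ℝ) S, y ^ (n - 1) * Real.exp (y ^ 2) := by
    rw [← Set.Ioi_inter_Iic (b := S), ← setIntegral_indicator measurableSet_Iic]
    congr 1
    funext y
    simp only [indicator, mem_Iic, hF, smul_eq_mul]
    split_ifs <;> simp
  have cont : Continuous fun y : ℝ => y ^ (n - 1) * Real.exp (y ^ 2) := by continuity
  have int1 : IntegrableOn (fun y : ℝ => y ^ (n - 1) * Real.exp (y ^ 2)) (Ioc (0:ℝ) 1) volume :=
    (cont.integrableOn_Icc (a := 0) (b := 1)).mono_set Ioc_subset_Icc_self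
  have int2 : IntegrableOn (fun y : ℝ => y ^ (n - 1) * Real.exp (y ^ 2)) (Ioc (1:ℝ) S) volume :=
    (cont.integrableOn_Icc (a := 1) (b := S)).mono_set Ioc_subset_Icc_self
  have step4 : ∫ y in Ioc (0:ℝ) S, y ^ (n - 1) * Real.exp (y ^ 2) =
      (∫ y in Ioc (0:ℝ) 1, y ^ (n - 1) * Real.exp (y ^ 2)) +
      ∫ y in Ioc (1:ℝ) S, y ^ (n - 1) * Real.exp (y ^ 2) := by
    rw [← setIntegral_union (Ioc_disjoint_Ioc_of_le le_rfl) measurableSet_Ioc int1 int2,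
      Ioc_union_Ioc_eq_Ioc (by norm_num) hS]
  have bound1 : ∫ y in Ioc (0:ℝ) 1, y ^ (n - 1) * Real.exp (y ^ 2) ≤ Real.exp 1 := by
    have : ∫ y in Ioc (0:ℝ) 1, y ^ (n - 1) * Real.exp (y ^ 2) ≤
        ∫ _y in Ioc (0:ℝ) 1, Real.exp 1 := by
      apply setIntegral_mono_on int1 (integrableOn_const (by simp)) measurableSet_Ioc
      intro y hy
      have h1 : y ^ (n-1) ≤ 1 := pow_le_one₀ hy.1.le hy.2
      have h2 : Real.exp (y ^ 2) ≤ Real.exp 1 := Real.exp_le_exp.2 (by nlinarith [hy.1, hy.2])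
      nlinarith [Real.exp_pos (y^2), pow_nonneg hy.1.le (n-1)]
    simpa using this
  have bound2 := ftc1 n hn S hS
  have vol_nonneg : (0:ℝ) ≤ ((volume : Measure (EuclideanSpace ℝ (Fin n))) (Metric.ball 0 1)).toReal :=
    ENNReal.toReal_nonneg
  have hphi : 1 ≤ Real.exp (S ^ 2) * S ^ ((n:ℝ) - 2) := one_le_phi n hn S hS
  rw [step1, step2, step3, step4]
  rw [nsmul_eq_mul, smul_eq_mul]
  have : (∫ y in Ioc (0:ℝ) 1, y ^ (n - 1) * Real.exp (y ^ 2)) +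
      (∫ y in Ioc (1:ℝ) S, y ^ (n - 1) * Real.exp (y ^ 2)) ≤
      (Real.exp 1 + 1) * (Real.exp (S ^ 2) * S ^ ((n:ℝ) - 2)) := by nlinarith [Real.exp_pos 1]
  calc (n:ℝ) * (((volume : Measure (EuclideanSpace ℝ (Fin n))) (Metric.ball 0 1)).toReal *
        ((∫ y in Ioc (0:ℝ) 1, y ^ (n - 1) * Real.exp (y ^ 2)) +
         ∫ y in Ioc (1:ℝ) S, y ^ (n - 1) * Real.exp (y ^ 2)))
      ≤ (n:ℝ) * (((volume : Measure (EuclideanSpace ℝ (Fin n))) (Metric.ball 0 1)).toReal *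
        ((Real.exp 1 + 1) * (Real.exp (S ^ 2) * S ^ ((n:ℝ) - 2)))) := by
        apply mul_le_mul_of_nonneg_left _ (Nat.cast_nonneg n)
        exact mul_le_mul_of_nonneg_left this vol_nonneg
    _ = (n * ((volume : Measure (EuclideanSpace ℝ (Fin n))) (Metric.ball 0 1)).toReal * (Real.exp 1 + 1))
        * (Real.exp (S ^ 2) * S ^ ((n:ℝ) - 2)) := by ring


lemma gaussM_apply_le {n : ℕ} {A : Set (EuclideanSpace ℝ (Fin n))} (hA : MeasurableSet A)
    {b : ℝ} (hb : ∫ x in A, Real.exp (‖x‖ ^ 2) ≤ b)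
    (hint : IntegrableOn (fun x : EuclideanSpace ℝ (Fin n) => Real.exp (‖x‖ ^ 2)) A volume) :
    gaussM n A ≤ ENNReal.ofReal (Real.pi ^ ((n:ℝ)/2) * b) := by
  have hc : (0:ℝ) < Real.pi ^ ((n:ℝ)/2) := Real.rpow_pos_of_pos Real.pi_pos _
  rw [gaussM, withDensity_apply _ hA]
  have : ∫⁻ x in A, ENNReal.ofReal (Real.pi ^ ((n:ℝ)/2) * Real.exp (‖x‖ ^ 2)) =
      ENNReal.ofReal (∫ x in A, Real.pi ^ ((n:ℝ)/2) * Real.exp (‖x‖ ^ 2)) := by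
    rw [← ofReal_integral_eq_lintegral_ofReal (hint.const_mul _)]
    exact Filter.Eventually.of_forall fun x => by positivity
  rw [this]
  apply ENNReal.ofReal_le_ofReal
  rw [integral_const_mul]
  exact mul_le_mul_of_nonneg_left hb hc.le

lemma gauss_ball_big (n : ℕ) (hn : 1 ≤ n) (S : ℝ) (hS : 1 ≤ S) :
    gaussM n (Metric.closedBall 0 S) ≤
      ENNReal.ofReal (Real.pi ^ ((n:ℝ)/2) *
        ((n * ((volume : Measure (EuclideanSpace ℝ (Fin n))) (Metric.ball 0 1)).toReal * (Real.exp 1 + 1))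
          * (Real.exp (S ^ 2) * S ^ ((n:ℝ) - 2)))) := by
  apply gaussM_apply_le measurableSet_closedBall (ball_int n hn S hS)
  exact (Continuous.continuousOn (by continuity)).integrableOn_compact
    (isCompact_closedBall 0 S)

lemma gauss_ball_small (n : ℕ) (m : ℝ) (hm0 : 0 ≤ m) (hm : m ≤ 1) :
    gaussM n (Metric.closedBall 0 m) ≤
      ENNReal.ofReal (Real.pi ^ ((n:ℝ)/2) *
        (Real.exp 1 * ((volume : Measure (EuclideanSpace ℝ (Fin n))) (Metric.ball 0 1)).toReal * m ^ n)) := by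
  apply gaussM_apply_le measurableSet_closedBall _
    ((Continuous.continuousOn (by continuity)).integrableOn_compact (isCompact_closedBall 0 m))
  have h1 : ∫ x : EuclideanSpace ℝ (Fin n) in Metric.closedBall 0 m, Real.exp (‖x‖ ^ 2) ≤
      ∫ _x : EuclideanSpace ℝ (Fin n) in Metric.closedBall 0 m, Real.exp 1 := by
    apply setIntegral_mono_on
      ((Continuous.continuousOn (by continuity)).integrableOn_compact (isCompact_closedBall 0 m))
      (integrableOn_const measure_closedBall_lt_top.ne) measurableSet_closedBall
    intro x hx
    rw [Metric.mem_closedBall, dist_zero_right] at hx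
    apply Real.exp_le_exp.2
    nlinarith [norm_nonneg x]
  have h2 : ∫ _x : EuclideanSpace ℝ (Fin n) in Metric.closedBall 0 m, Real.exp 1 =
      ((volume : Measure (EuclideanSpace ℝ (Fin n))) (Metric.closedBall 0 m)).toReal * Real.exp 1 := by
    rw [setIntegral_const, smul_eq_mul]; rfl
  have h3 : ((volume : Measure (EuclideanSpace ℝ (Fin n))) (Metric.closedBall 0 m)).toReal =
      m ^ n * ((volume : Measure (EuclideanSpace ℝ (Fin n))) (Metric.ball 0 1)).toReal := by
    rw [Measure.addHaar_closedBall _ _ hm0, finrank_euclideanSpace_fin]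
    rw [ENNReal.toReal_mul, ENNReal.toReal_ofReal (by positivity)]
  calc ∫ x : EuclideanSpace ℝ (Fin n) in Metric.closedBall 0 m, Real.exp (‖x‖ ^ 2)
      ≤ _ := h1
    _ = m ^ n * ((volume : Measure (EuclideanSpace ℝ (Fin n))) (Metric.ball 0 1)).toReal * Real.exp 1 := by
        rw [h2, h3]
    _ = Real.exp 1 * ((volume : Measure (EuclideanSpace ℝ (Fin n))) (Metric.ball 0 1)).toReal * m ^ n := by ring


lemma pt_small (μ ν : ℝ) {t r : ℝ} (hr0 : 0 ≤ r) (hr1 : r ≤ 1)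
    (h : t < Real.exp (-r ^ 2) * r ^ (-μ) * (1 + r) ^ (-ν)) :
    t < r ^ (-μ) * max 1 ((2:ℝ) ^ (-ν)) := by
  have e1 : Real.exp (-r ^ 2) ≤ 1 := Real.exp_le_one_iff.2 (by nlinarith)
  have e2 : (1 + r) ^ (-ν) ≤ max 1 ((2:ℝ) ^ (-ν)) := by
    rcases le_or_gt 0 ν with hν | hν
    · exact le_trans (Real.rpow_le_one_of_one_le_of_nonpos (by linarith) (by linarith))
        (le_max_left _ _)
    · exact le_trans (Real.rpow_le_rpow (by linarith) (by linarith) (by linarith))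
        (le_max_right _ _)
  have p1 : (0:ℝ) ≤ r ^ (-μ) := Real.rpow_nonneg hr0 _
  have p2 : (0:ℝ) ≤ (1 + r) ^ (-ν) := Real.rpow_nonneg (by linarith) _
  calc t < Real.exp (-r ^ 2) * r ^ (-μ) * (1 + r) ^ (-ν) := h
    _ ≤ 1 * r ^ (-μ) * (1 + r) ^ (-ν) := by
        apply mul_le_mul_of_nonneg_right _ p2
        exact mul_le_mul_of_nonneg_right e1 p1
    _ = r ^ (-μ) * (1 + r) ^ (-ν) := by ring
    _ ≤ r ^ (-μ) * max 1 ((2:ℝ) ^ (-ν)) := mul_le_mul_of_nonneg_left e2 p1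

lemma pt_big (n : ℕ) (hn : 1 ≤ n) (μ ν : ℝ) (h1 : (n:ℝ) - 2 ≤ μ + ν) {t r : ℝ}
    (ht : 0 < t) (hr : 1 ≤ r)
    (h : t < Real.exp (-r ^ 2) * r ^ (-μ) * (1 + r) ^ (-ν)) :
    Real.exp (r ^ 2) * r ^ ((n:ℝ) - 2) < max 1 ((2:ℝ) ^ (-ν)) / t := by
  set c₁ := max 1 ((2:ℝ) ^ (-ν)) with hc₁
  have hr0 : (0:ℝ) < r := by linarith
  have hc₁1 : (1:ℝ) ≤ c₁ := le_max_left _ _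
  have sa : (1 + r) ^ (-ν) ≤ c₁ * r ^ (-ν) := by
    rcases le_or_gt 0 ν with hν | hν
    · calc (1 + r) ^ (-ν) ≤ r ^ (-ν) :=
            Real.rpow_le_rpow_of_nonpos hr0 (by linarith) (by linarith)
        _ ≤ c₁ * r ^ (-ν) := by
            nlinarith [Real.rpow_nonneg hr0.le (-ν)]
    · calc (1 + r) ^ (-ν) ≤ (2 * r) ^ (-ν) :=
            Real.rpow_le_rpow (by linarith) (by linarith) (by linarith)
        _ = (2:ℝ) ^ (-ν) * r ^ (-ν) := Real.mul_rpow (by norm_num) hr0.le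
        _ ≤ c₁ * r ^ (-ν) := by
            apply mul_le_mul_of_nonneg_right (le_max_right _ _) (Real.rpow_nonneg hr0.le _)
  have sb : t < c₁ * (Real.exp (-r ^ 2) * r ^ (2 - (n:ℝ))) := by
    have hmm : Real.exp (-r ^ 2) * r ^ (-μ) * (1 + r) ^ (-ν) ≤
        c₁ * (Real.exp (-r ^ 2) * r ^ (-(μ + ν))) := by
      have : r ^ (-(μ+ν)) = r ^ (-μ) * r ^ (-ν) := by
        rw [← Real.rpow_add hr0]; ring_nf
      rw [this]
      calc Real.exp (-r ^ 2) * r ^ (-μ) * (1 + r) ^ (-ν)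
          ≤ Real.exp (-r ^ 2) * r ^ (-μ) * (c₁ * r ^ (-ν)) :=
            mul_le_mul_of_nonneg_left sa (by positivity)
        _ = c₁ * (Real.exp (-r ^ 2) * (r ^ (-μ) * r ^ (-ν))) := by ring
    have hcc : r ^ (-(μ+ν)) ≤ r ^ (2 - (n:ℝ)) :=
      Real.rpow_le_rpow_of_exponent_le hr (by linarith)
    calc t < Real.exp (-r ^ 2) * r ^ (-μ) * (1 + r) ^ (-ν) := h
      _ ≤ c₁ * (Real.exp (-r ^ 2) * r ^ (-(μ + ν))) := hmm
      _ ≤ c₁ * (Real.exp (-r ^ 2) * r ^ (2 - (n:ℝ))) := by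
          apply mul_le_mul_of_nonneg_left _ (by linarith)
          exact mul_le_mul_of_nonneg_left hcc (Real.exp_pos _).le
  have hpos : (0:ℝ) < Real.exp (r ^ 2) * r ^ ((n:ℝ) - 2) := by positivity
  rw [lt_div_iff₀ ht]
  have key := mul_lt_mul_of_pos_right sb hpos
  calc Real.exp (r ^ 2) * r ^ ((n:ℝ) - 2) * t
      = t * (Real.exp (r ^ 2) * r ^ ((n:ℝ) - 2)) := by ring
    _ < c₁ * (Real.exp (-r ^ 2) * r ^ (2 - (n:ℝ))) * (Real.exp (r ^ 2) * r ^ ((n:ℝ) - 2)) := key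
    _ = c₁ * ((Real.exp (-r ^ 2) * Real.exp (r ^ 2)) * (r ^ (2 - (n:ℝ)) * r ^ ((n:ℝ) - 2))) := by
        ring
    _ = c₁ := by
        rw [← Real.exp_add, ← Real.rpow_add hr0]
        norm_num


lemma core (n : ℕ) (hn : 1 ≤ n) (μ ν : ℝ) (h1 : (n:ℝ) - 2 ≤ μ + ν) (h2 : μ ≤ n) :
    ∃ C : ℝ, 0 < C ∧ ∀ t : ℝ, 0 < t →
      gaussM n {x : EuclideanSpace ℝ (Fin n) |
          t < Real.exp (-‖x‖ ^ 2) * ‖x‖ ^ (-μ) * (1 + ‖x‖) ^ (-ν)} ≤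
        ENNReal.ofReal (C / t) := by
  set c₁ : ℝ := max 1 ((2:ℝ) ^ (-ν)) with hc₁
  have hc₁1 : (1:ℝ) ≤ c₁ := le_max_left _ _
  have hc₁0 : (0:ℝ) < c₁ := by linarith
  set vb : ℝ := ((volume : Measure (EuclideanSpace ℝ (Fin n))) (Metric.ball 0 1)).toReal with hvb
  have hvb0 : 0 ≤ vb := ENNReal.toReal_nonneg
  set K1 : ℝ := Real.pi ^ ((n:ℝ)/2) * (Real.exp 1 * vb) with hK1
  set K2 : ℝ := Real.pi ^ ((n:ℝ)/2) * (n * vb * (Real.exp 1 + 1)) with hK2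
  have hK1_0 : 0 ≤ K1 := by positivity
  have hK2_0 : 0 ≤ K2 := by positivity
  refine ⟨(K1 + K2) * c₁ + 1, by positivity, ?_⟩
  intro t ht
  set A : ℝ := c₁ / t with hA
  have hA0 : 0 < A := by positivity
  set G : Set (EuclideanSpace ℝ (Fin n)) :=
    {x | t < Real.exp (-‖x‖ ^ 2) * ‖x‖ ^ (-μ) * (1 + ‖x‖) ^ (-ν)} with hG
  set E1 : Set (EuclideanSpace ℝ (Fin n)) := G ∩ Metric.closedBall 0 1 with hE1
  set E2 : Set (EuclideanSpace ℝ (Fin n)) := G ∩ (Metric.closedBall 0 1)ᶜ with hE2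
  have hsplit : gaussM n G ≤ gaussM n E1 + gaussM n E2 := by
    refine le_trans (measure_mono ?_) (measure_union_le E1 E2)
    intro x hx
    by_cases hx1 : x ∈ Metric.closedBall 0 1
    · exact Or.inl ⟨hx, hx1⟩
    · exact Or.inr ⟨hx, hx1⟩
  -- Part 1
  have part1 : gaussM n E1 ≤ ENNReal.ofReal (K1 * A) := by
    rcases Set.eq_empty_or_nonempty E1 with hemp | ⟨x₀, hx₀G, hx₀B⟩
    · rw [hemp]; simp
    have hx₀norm : ‖x₀‖ ≤ 1 := by
      rw [Metric.mem_closedBall, dist_zero_right] at hx₀B; exact hx₀B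
    obtain ⟨m, hm0, hm1, hsub, hmn⟩ :
        ∃ m : ℝ, 0 ≤ m ∧ m ≤ 1 ∧ E1 ⊆ Metric.closedBall 0 m ∧ m ^ n ≤ A := by
      rcases le_or_gt μ 0 with hμ | hμ
      · refine ⟨1, by norm_num, le_refl _, fun x hx => hx.2, ?_⟩
        have hps := pt_small μ ν (norm_nonneg x₀) hx₀norm hx₀G
        have : ‖x₀‖ ^ (-μ) ≤ 1 :=
          Real.rpow_le_one (norm_nonneg x₀) hx₀norm (by linarith)
        have ht_lt : t < c₁ := by nlinarith
        rw [one_pow, hA]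
        rw [le_div_iff₀ ht]
        linarith
      · -- μ > 0
        set ρ : ℝ := A ^ (1/μ) with hρ
        have hρ0 : 0 < ρ := Real.rpow_pos_of_pos hA0 _
        have hρμ : ρ ^ μ = A := by
          rw [hρ, ← Real.rpow_mul hA0.le, one_div, inv_mul_cancel₀ hμ.ne', Real.rpow_one]
        refine ⟨min 1 ρ, le_min (by norm_num) hρ0.le, min_le_left _ _, ?_, ?_⟩
        · intro x hx
          have hxnorm : ‖x‖ ≤ 1 := by
            have h' := hx.2
            rwa [Metric.mem_closedBall, dist_zero_right] at h'
          have hps := pt_small μ ν (norm_nonneg x) hxnorm hx.1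
          have hxpos : 0 < ‖x‖ := by
            rcases eq_or_lt_of_le (norm_nonneg x) with h0 | h0
            · exfalso
              have hz : ((0:ℝ)) ^ (-μ) = 0 := Real.zero_rpow (by simp; linarith)
              rw [← h0, hz, zero_mul] at hps
              linarith [hps, ht]
            · exact h0
          have hP : 0 < ‖x‖ ^ μ := Real.rpow_pos_of_pos hxpos μ
          have htP : t * (‖x‖ ^ μ) < c₁ := by
            have hh := mul_lt_mul_of_pos_right hps hP
            rwa [Real.rpow_neg (norm_nonneg x), mul_comm ((‖x‖ ^ μ)⁻¹) c₁, mul_assoc,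
              inv_mul_cancel₀ hP.ne', mul_one] at hh
          have hxμ : ‖x‖ ^ μ < A := by
            rw [hA, lt_div_iff₀ ht]; linarith
          have hxρ : ‖x‖ ≤ ρ := by
            have h := Real.rpow_le_rpow (Real.rpow_nonneg (norm_nonneg x) μ) hxμ.le
              (by positivity : (0:ℝ) ≤ 1/μ)
            rwa [← Real.rpow_mul (norm_nonneg x), mul_one_div_cancel hμ.ne',
              Real.rpow_one] at h
          rw [Metric.mem_closedBall, dist_zero_right]
          exact le_min hxnorm hxρ
        · rcases le_or_gt 1 ρ with hρ1 | hρ1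
          · rw [min_eq_left hρ1, one_pow]
            by_contra hA1
            push_neg at hA1
            have : ρ < 1 := Real.rpow_lt_one hA0.le (by linarith) (by positivity)
            linarith
          · rw [min_eq_right hρ1.le, ← Real.rpow_natCast ρ n]
            calc ρ ^ ((n:ℕ):ℝ) ≤ ρ ^ μ := by
                  apply Real.rpow_le_rpow_of_exponent_ge hρ0 hρ1.le h2
              _ = A := hρμ
    calc gaussM n E1 ≤ gaussM n (Metric.closedBall 0 m) := measure_mono hsub
      _ ≤ ENNReal.ofReal (Real.pi ^ ((n:ℝ)/2) * (Real.exp 1 * vb * m ^ n)) :=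
          gauss_ball_small n m hm0 hm1
      _ ≤ ENNReal.ofReal (K1 * A) := by
          apply ENNReal.ofReal_le_ofReal
          rw [hK1]
          calc Real.pi ^ ((n:ℝ)/2) * (Real.exp 1 * vb * m ^ n)
              = Real.pi ^ ((n:ℝ)/2) * (Real.exp 1 * vb) * m ^ n := by ring
            _ ≤ Real.pi ^ ((n:ℝ)/2) * (Real.exp 1 * vb) * A := by
                apply mul_le_mul_of_nonneg_left hmn (by positivity)
  -- Part 2
  have part2 : gaussM n E2 ≤ ENNReal.ofReal (K2 * A) := by
    rcases Set.eq_empty_or_nonempty E2 with hemp | ⟨x₀, hx₀G, hx₀B⟩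
    · rw [hemp]; simp
    set Es : Set ℝ := {r : ℝ | 1 ≤ r ∧ Real.exp (r ^ 2) * r ^ ((n:ℝ) - 2) < A} with hEs
    have memEs : ∀ x : EuclideanSpace ℝ (Fin n), x ∈ E2 → ‖x‖ ∈ Es := by
      rintro x ⟨hxG, hxB⟩
      have hx1 : 1 ≤ ‖x‖ := by
        simp only [mem_compl_iff, Metric.mem_closedBall, dist_zero_right, not_le] at hxB
        exact hxB.le
      exact ⟨hx1, pt_big n hn μ ν h1 ht hx1 hxG⟩
    have hbdd : BddAbove Es := by
      refine ⟨Real.sqrt (2 * Real.log A), fun r hr => ?_⟩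
      obtain ⟨hr1, hrφ⟩ := hr
      have hr0 : (0:ℝ) < r := by linarith
      have key : Real.exp (r ^ 2 / 2) ≤ Real.exp (r ^ 2) * r ^ ((n:ℝ) - 2) := by
        have e1 : r ^ ((-1:ℝ)) ≤ r ^ ((n:ℝ) - 2) := by
          apply Real.rpow_le_rpow_of_exponent_le hr1
          have : (1:ℝ) ≤ (n:ℝ) := by exact_mod_cast hn
          linarith
        have e2 : (Real.exp (r ^ 2 / 2))⁻¹ ≤ r ^ ((-1:ℝ)) := by
          rw [Real.rpow_neg_one]
          exact inv_anti₀ hr0 (self_le_exp_half_sq r)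
        calc Real.exp (r ^ 2 / 2) = Real.exp (r ^ 2) * (Real.exp (r ^ 2 / 2))⁻¹ := by
              rw [← Real.exp_neg, ← Real.exp_add]; ring_nf
          _ ≤ Real.exp (r ^ 2) * r ^ ((n:ℝ) - 2) := by
              apply mul_le_mul_of_nonneg_left (le_trans e2 e1) (Real.exp_pos _).le
      have hlt : Real.exp (r ^ 2 / 2) < A := lt_of_le_of_lt key hrφ
      have : r ^ 2 / 2 < Real.log A := (Real.lt_log_iff_exp_lt hA0).2 hlt
      calc r = Real.sqrt (r ^ 2) := by rw [Real.sqrt_sq hr0.le]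
        _ ≤ Real.sqrt (2 * Real.log A) := Real.sqrt_le_sqrt (by linarith)
    have hne : Es.Nonempty := ⟨‖x₀‖, memEs x₀ ⟨hx₀G, hx₀B⟩⟩
    set S : ℝ := sSup Es with hS
    have hS1 : 1 ≤ S := le_trans (memEs x₀ ⟨hx₀G, hx₀B⟩).1 (le_csSup hbdd (memEs x₀ ⟨hx₀G, hx₀B⟩))
    have hSA : Real.exp (S ^ 2) * S ^ ((n:ℝ) - 2) ≤ A := by
      have hcl : S ∈ closure Es := csSup_mem_closure hne hbdd
      have hclosed : IsClosed {r : ℝ | 1 ≤ r ∧ Real.exp (r ^ 2) * r ^ ((n:ℝ) - 2) ≤ A} := by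
        have : {r : ℝ | 1 ≤ r ∧ Real.exp (r ^ 2) * r ^ ((n:ℝ) - 2) ≤ A} =
            Ici 1 ∩ (fun r : ℝ => Real.exp (r ^ 2) * r ^ ((n:ℝ) - 2)) ⁻¹' (Iic A) := by
          ext r; simp [mem_Ici, mem_Iic]
        rw [this]
        apply ContinuousOn.preimage_isClosed_of_isClosed _ isClosed_Ici isClosed_Iic
        apply ContinuousOn.mul ((Real.continuous_exp.comp (continuous_pow 2)).continuousOn)
        exact ContinuousOn.rpow_const continuousOn_id
          (fun r hr => Or.inl (by intro h; rw [h] at hr; simp [mem_Ici] at hr; linarith))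
      have hsubcl : closure Es ⊆ {r : ℝ | 1 ≤ r ∧ Real.exp (r ^ 2) * r ^ ((n:ℝ) - 2) ≤ A} :=
        closure_minimal (fun r hr => ⟨hr.1, hr.2.le⟩) hclosed
      exact (hsubcl hcl).2
    have hsub : E2 ⊆ Metric.closedBall 0 S := by
      intro x hx
      rw [Metric.mem_closedBall, dist_zero_right]
      exact le_csSup hbdd (memEs x hx)
    calc gaussM n E2 ≤ gaussM n (Metric.closedBall 0 S) := measure_mono hsub
      _ ≤ ENNReal.ofReal (Real.pi ^ ((n:ℝ)/2) *
            ((n * vb * (Real.exp 1 + 1)) * (Real.exp (S ^ 2) * S ^ ((n:ℝ) - 2)))) :=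
          gauss_ball_big n hn S hS1
      _ ≤ ENNReal.ofReal (K2 * A) := by
          apply ENNReal.ofReal_le_ofReal
          calc Real.pi ^ ((n:ℝ)/2) *
                ((n * vb * (Real.exp 1 + 1)) * (Real.exp (S ^ 2) * S ^ ((n:ℝ) - 2)))
              = K2 * (Real.exp (S ^ 2) * S ^ ((n:ℝ) - 2)) := by rw [hK2]; ring
            _ ≤ K2 * A := mul_le_mul_of_nonneg_left hSA hK2_0
  -- combine
  calc gaussM n G ≤ gaussM n E1 + gaussM n E2 := hsplit
    _ ≤ ENNReal.ofReal (K1 * A) + ENNReal.ofReal (K2 * A) := add_le_add part1 part2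
    _ = ENNReal.ofReal (K1 * A + K2 * A) := by
        rw [ENNReal.ofReal_add (by positivity) (by positivity)]
    _ ≤ ENNReal.ofReal (((K1 + K2) * c₁ + 1) / t) := by
        apply ENNReal.ofReal_le_ofReal
        rw [hA]
        have heq : K1 * (c₁ / t) + K2 * (c₁ / t) = ((K1 + K2) * c₁) / t := by ring
        rw [heq]
        gcongr
        linarith


/-- for μ + ν ≥ n − 2 and μ ≤ n, the operator with kernel
e^{-|x|²+|y|²}|x|^{-μ}(1+|x|)^{-ν} is of weak type (1,1) w.r.t. γ₋₁. -/
theorem power_kernel_weak_type (n : ℕ) (hn : 1 ≤ n) (μ ν : ℝ)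
    (h1 : (n : ℝ) - 2 ≤ μ + ν) (h2 : μ ≤ n) :
    WeakType11 (fun x y : EuclideanSpace ℝ (Fin n) =>
      Real.exp (-‖x‖ ^ 2 + ‖y‖ ^ 2) * ‖x‖ ^ (-μ) * (1 + ‖x‖) ^ (-ν)) := by
  obtain ⟨C, hC0, hC⟩ := core n hn μ ν h1 h2
  have hc : (0:ℝ) < Real.pi ^ ((n:ℝ)/2) := Real.rpow_pos_of_pos Real.pi_pos _
  refine ⟨C / Real.pi ^ ((n:ℝ)/2), ?_⟩
  intro f hf s hs
  set B : ℝ := ∫ y : EuclideanSpace ℝ (Fin n), Real.exp (‖y‖^2) * |f y| with hB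
  have hB0 : 0 ≤ B := integral_nonneg fun y => by positivity
  have hgauss_int : ∫ y, |f y| ∂(gaussM n) = Real.pi ^ ((n:ℝ)/2) * B := by
    rw [gaussM]
    have hmeas : Measurable fun y : EuclideanSpace ℝ (Fin n) =>
        (Real.pi ^ ((n:ℝ)/2) * Real.exp (‖y‖^2)).toNNReal :=
      Measurable.real_toNNReal
        (continuous_const.mul (Real.continuous_exp.comp ((continuous_norm).pow 2))).measurable
    have hrw : (fun y : EuclideanSpace ℝ (Fin n) =>
        ENNReal.ofReal (Real.pi ^ ((n:ℝ)/2) * Real.exp (‖y‖^2))) =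
        fun y => (((Real.pi ^ ((n:ℝ)/2) * Real.exp (‖y‖^2)).toNNReal : ℝ≥0) : ℝ≥0∞) := rfl
    rw [hrw, integral_withDensity_eq_integral_smul hmeas]
    rw [hB, ← integral_const_mul]
    congr 1
    funext y
    rw [NNReal.smul_def, smul_eq_mul, Real.coe_toNNReal _ (by positivity)]
    ring
  have hTf : ∀ x : EuclideanSpace ℝ (Fin n),
      (∫ y, (Real.exp (-‖x‖^2 + ‖y‖^2) * ‖x‖^(-μ) * (1+‖x‖)^(-ν)) * f y) =
        (Real.exp (-‖x‖^2) * ‖x‖^(-μ) * (1+‖x‖)^(-ν)) * ∫ y, Real.exp (‖y‖^2) * f y := by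
    intro x
    rw [← integral_const_mul]
    congr 1; funext y
    rw [Real.exp_add]; ring
  have hbound : ∀ x : EuclideanSpace ℝ (Fin n),
      |∫ y, (Real.exp (-‖x‖^2 + ‖y‖^2) * ‖x‖^(-μ) * (1+‖x‖)^(-ν)) * f y| ≤
        (Real.exp (-‖x‖^2) * ‖x‖^(-μ) * (1+‖x‖)^(-ν)) * B := by
    intro x
    have hg0 : (0:ℝ) ≤ Real.exp (-‖x‖^2) * ‖x‖^(-μ) * (1+‖x‖)^(-ν) := by positivity
    rw [hTf x, abs_mul, abs_of_nonneg hg0]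
    apply mul_le_mul_of_nonneg_left _ hg0
    calc |∫ y, Real.exp (‖y‖^2) * f y| ≤ ∫ y, ‖Real.exp (‖y‖^2) * f y‖ := by
          rw [← Real.norm_eq_abs]; exact norm_integral_le_integral_norm _
      _ = B := by
          rw [hB]; congr 1; funext y
          rw [Real.norm_eq_abs, abs_mul, abs_of_pos (Real.exp_pos _)]
  rcases lt_or_ge 0 B with hBpos | hBneg
  · have hsub : {x : EuclideanSpace ℝ (Fin n) |
        s < |∫ y, (Real.exp (-‖x‖^2 + ‖y‖^2) * ‖x‖^(-μ) * (1+‖x‖)^(-ν)) * f y|} ⊆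
        {x : EuclideanSpace ℝ (Fin n) |
          s / B < Real.exp (-‖x‖^2) * ‖x‖^(-μ) * (1+‖x‖)^(-ν)} := by
      intro x hx
      have := lt_of_lt_of_le hx (hbound x)
      exact (div_lt_iff₀ hBpos).2 this
    calc gaussM n {x : EuclideanSpace ℝ (Fin n) |
          s < |∫ y, (Real.exp (-‖x‖^2 + ‖y‖^2) * ‖x‖^(-μ) * (1+‖x‖)^(-ν)) * f y|}
        ≤ gaussM n {x : EuclideanSpace ℝ (Fin n) |
            s / B < Real.exp (-‖x‖^2) * ‖x‖^(-μ) * (1+‖x‖)^(-ν)} := measure_mono hsub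
      _ ≤ ENNReal.ofReal (C / (s / B)) := hC (s/B) (by positivity)
      _ = ENNReal.ofReal (C / Real.pi ^ ((n:ℝ)/2) / s * ∫ y, |f y| ∂(gaussM n)) := by
          rw [hgauss_int]
          congr 1
          field_simp
  · have hB0' : B = 0 := le_antisymm hBneg hB0
    have hempty : {x : EuclideanSpace ℝ (Fin n) |
        s < |∫ y, (Real.exp (-‖x‖^2 + ‖y‖^2) * ‖x‖^(-μ) * (1+‖x‖)^(-ν)) * f y|} = ∅ := by
      apply Set.eq_empty_iff_forall_notMem.2
      intro x hx
      have := lt_of_lt_of_le hx (hbound x)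
      rw [hB0', mul_zero] at this
      linarith
    rw [hempty]
    simp
end

section
/- Let n ≥ 1 and let μ, ν ≥ 0 be such that μ > ν + 1. Then there is a constant C (depending only on n, μ, ν) such that for every (x,y) ∈ N_2 with x ≠ y, ∫_0^1 |x−ry|^ν (1−r^2)^{−(n+μ)/2} e^{−|x−ry|^2/(1−r^2)} dr ≤ C |x−y|^{−(n+μ−ν−2)}. -/
open MeasureTheory Real Filter Set

set_option maxHeartbeats 2000000

lemma aux_rpow_exp (p : ℝ) (hp : 0 ≤ p) :
    ∃ C : ℝ, 1 ≤ C ∧ ∀ w : ℝ, 0 ≤ w → w ^ p * Real.exp (-w) ≤ C := by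
  refine ⟨((Nat.ceil p).factorial : ℝ), by exact_mod_cast Nat.one_le_iff_ne_zero.2 (Nat.factorial_ne_zero _), ?_⟩
  intro w hw
  rcases le_or_gt w 1 with h1 | h1
  · have h2 : w ^ p ≤ 1 := Real.rpow_le_one hw h1 hp
    have h3 : Real.exp (-w) ≤ 1 := Real.exp_le_one_iff.2 (by linarith)
    have h4 : (0:ℝ) < Real.exp (-w) := Real.exp_pos _
    have h5 : (1:ℝ) ≤ (Nat.ceil p).factorial := by
      exact_mod_cast Nat.one_le_iff_ne_zero.2 (Nat.factorial_ne_zero _)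
    nlinarith [Real.rpow_nonneg hw p]
  · have h2 : w ^ p ≤ w ^ ((Nat.ceil p : ℝ)) :=
      Real.rpow_le_rpow_of_exponent_le h1.le (Nat.le_ceil p)
    have h3 : w ^ ((Nat.ceil p : ℝ)) = w ^ (Nat.ceil p) := Real.rpow_natCast w _
    have h4 : w ^ (Nat.ceil p) ≤ (Nat.ceil p).factorial * Real.exp w := by
      have := Real.pow_div_factorial_le_exp (x := w) hw (Nat.ceil p)
      have hf : (0:ℝ) < (Nat.ceil p).factorial := by positivity
      calc w ^ (Nat.ceil p) = (w ^ (Nat.ceil p) / (Nat.ceil p).factorial) * (Nat.ceil p).factorial := by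
            field_simp
        _ ≤ Real.exp w * (Nat.ceil p).factorial := by
            exact mul_le_mul_of_nonneg_right this hf.le
        _ = (Nat.ceil p).factorial * Real.exp w := by ring
    have h5 : (0:ℝ) < Real.exp (-w) := Real.exp_pos _
    calc w ^ p * Real.exp (-w) ≤ ((Nat.ceil p).factorial * Real.exp w) * Real.exp (-w) := by
          refine mul_le_mul_of_nonneg_right ?_ h5.le
          rw [← h3] at h4; linarith
      _ = (Nat.ceil p).factorial := by rw [mul_assoc, ← Real.exp_add]; simp


/-- local integral estimate: for μ > ν + 1, μ, ν ≥ 0 and (x,y) ∈ N₂,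
∫₀¹ |x−ry|^ν (1−r²)^{-(n+μ)/2} e^{-|x−ry|²/(1−r²)} dr ≲ |x−y|^{-(n+μ−ν−2)}. -/
theorem local_integral_estimate (n : ℕ) (hn : 1 ≤ n) (μ ν : ℝ)
    (hμ : 0 ≤ μ) (hν : 0 ≤ ν) (h : ν + 1 < μ) :
    ∃ C : ℝ, ∀ x y : EuclideanSpace ℝ (Fin n), (x, y) ∈ Nset n 2 → x ≠ y →
      (∫ r in Set.Ioo (0 : ℝ) 1,
          ‖x - r • y‖ ^ ν * (1 - r ^ 2) ^ (-(((n : ℝ) + μ) / 2)) *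
            Real.exp (-‖x - r • y‖ ^ 2 / (1 - r ^ 2))) ≤
        C * ‖x - y‖ ^ (-((n : ℝ) + μ - ν - 2)) := by
  obtain ⟨C1, hC11, hC1⟩ := aux_rpow_exp (ν/2) (by linarith)
  set β : ℝ := ((n:ℝ) + μ - ν)/2 with hβ
  have hn1 : (1:ℝ) ≤ n := by exact_mod_cast hn
  have hβ1 : 1 < β := by rw [hβ]; linarith
  obtain ⟨C2, hC21, hC2⟩ := aux_rpow_exp β (by linarith)
  set K : ℝ := C1 * 2 ^ (ν/2) with hK
  have hK0 : 0 < K := mul_pos (lt_of_lt_of_le one_pos hC11) (Real.rpow_pos_of_pos two_pos _)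
  have hC20 : 0 < C2 := lt_of_lt_of_le one_pos hC21
  have h8β : (0:ℝ) < 8 ^ β := Real.rpow_pos_of_pos (by norm_num) _
  refine ⟨K * 4 ^ (β-1) / (β-1) + K * C2 * 8 ^ β / 4, ?_⟩
  intro x y hxy hne
  set a : ℝ := ‖x - y‖ with ha
  have ha0 : 0 < a := norm_sub_pos_iff.2 hne
  have hden : (1:ℝ) ≤ 1 + ‖x‖ + ‖y‖ := by linarith [norm_nonneg x, norm_nonneg y]
  have haxy : a * (1 + ‖x‖ + ‖y‖) ≤ 2 := by
    have h2 : a ≤ 2 / (1 + ‖x‖ + ‖y‖) := hxy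
    rw [le_div_iff₀ (by linarith)] at h2
    exact h2
  have ha2 : a ≤ 2 := by nlinarith [norm_nonneg x, norm_nonneg y]
  have hay : a * ‖y‖ ≤ 2 := by nlinarith [norm_nonneg x, norm_nonneg y]
  set m : ℝ := 1 - a^2/4 with hm
  have hm0 : 0 ≤ m := by rw [hm]; nlinarith
  have hm1 : m < 1 := by rw [hm]; nlinarith
  set c3 : ℝ := K * C2 * 8 ^ β with hc3
  set g : ℝ → ℝ := fun r => if r ≤ m then K * (1-r) ^ (-β) else c3 * a ^ (-(2*β)) with hg
  -- part 1 : pointwise estimate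
  have key : ∀ r ∈ Set.Ioo (0:ℝ) 1,
      ‖x - r • y‖ ^ ν * (1 - r ^ 2) ^ (-(((n : ℝ) + μ) / 2)) *
        Real.exp (-‖x - r • y‖ ^ 2 / (1 - r ^ 2)) ≤ g r := by
    intro r hr
    set t : ℝ := 1 - r^2 with htd
    set u : ℝ := ‖x - r • y‖ with hu
    have ht0 : 0 < t := by rw [htd]; nlinarith [hr.1, hr.2]
    have hu0 : 0 ≤ u := norm_nonneg _
    have hw0 : 0 ≤ u^2/(2*t) := by positivity
    have e1 : Real.exp (-u^2/t) = Real.exp (-(u^2/(2*t))) * Real.exp (-(u^2/(2*t))) := by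
      rw [← Real.exp_add]; congr 1; field_simp; ring
    have e2 : u ^ ν * Real.exp (-(u^2/(2*t))) ≤ K * t ^ (ν/2) := by
      have hb := hC1 (u^2/(2*t)) hw0
      have hrw : (u^2/(2*t)) ^ (ν/2) = u ^ ν / (2*t) ^ (ν/2) := by
        rw [Real.div_rpow (by positivity) (by positivity)]
        congr 1
        rw [← Real.rpow_natCast u 2, ← Real.rpow_mul hu0, show ((2:ℕ):ℝ) * (ν/2) = ν by push_cast; ring]
      rw [hrw] at hb
      have h2t : (0:ℝ) < (2*t) ^ (ν/2) := Real.rpow_pos_of_pos (by linarith) _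
      rw [div_mul_eq_mul_div, div_le_iff₀ h2t] at hb
      calc u ^ ν * Real.exp (-(u^2/(2*t))) ≤ C1 * (2*t) ^ (ν/2) := hb
        _ = K * t ^ (ν/2) := by
            rw [Real.mul_rpow (by norm_num) ht0.le, hK]; ring
    have step1 : u ^ ν * t ^ (-(((n : ℝ) + μ) / 2)) * Real.exp (-u ^ 2 / t) ≤
        K * t ^ (-β) * Real.exp (-(u^2/(2*t))) := by
      have htp : (0:ℝ) ≤ t ^ (-(((n : ℝ) + μ) / 2)) := Real.rpow_nonneg ht0.le _
      have hep : (0:ℝ) < Real.exp (-(u^2/(2*t))) := Real.exp_pos _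
      calc u ^ ν * t ^ (-(((n : ℝ) + μ) / 2)) * Real.exp (-u ^ 2 / t)
          = (u ^ ν * Real.exp (-(u^2/(2*t)))) * t ^ (-(((n : ℝ) + μ) / 2)) *
              Real.exp (-(u^2/(2*t))) := by rw [e1]; ring
        _ ≤ (K * t ^ (ν/2)) * t ^ (-(((n : ℝ) + μ) / 2)) * Real.exp (-(u^2/(2*t))) := by
            gcongr
        _ = K * t ^ (-β) * Real.exp (-(u^2/(2*t))) := by
            rw [mul_assoc K, ← Real.rpow_add ht0]
            congr 2
            rw [hβ]; ring
    by_cases hrm : r ≤ m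
    · have hgr : g r = K * (1-r) ^ (-β) := if_pos hrm
      rw [hgr]
      have h1r : (0:ℝ) < 1 - r := by linarith [hr.2]
      have hle : (1:ℝ) - r ≤ t := by rw [htd]; nlinarith [hr.1, hr.2]
      have hcmp : t ^ (-β) ≤ (1-r) ^ (-β) :=
        Real.rpow_le_rpow_of_nonpos h1r hle (by linarith)
      have hexp : Real.exp (-(u^2/(2*t))) ≤ 1 := Real.exp_le_one_iff.2 (by linarith)
      calc u ^ ν * t ^ (-(((n : ℝ) + μ) / 2)) * Real.exp (-u ^ 2 / t)
          ≤ K * t ^ (-β) * Real.exp (-(u^2/(2*t))) := step1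
        _ ≤ K * t ^ (-β) * 1 := by
            have := Real.rpow_nonneg ht0.le (-β)
            have := hK0.le
            gcongr
        _ ≤ K * (1-r) ^ (-β) := by
            rw [mul_one]; exact mul_le_mul_of_nonneg_left hcmp hK0.le
    · have hgr : g r = c3 * a ^ (-(2*β)) := if_neg hrm
      rw [hgr]
      push_neg at hrm
      have h1r : 1 - r < a^2/4 := by rw [hm] at hrm; linarith
      -- lower bound on u
      have hy2 : ‖y‖ ≤ 2/a := by rw [le_div_iff₀ ha0]; linarith [hay]
      have hdecomp : x - y = (x - r • y) - (1-r) • y := by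
        rw [sub_smul, one_smul]; abel
      have hnorm : a ≤ u + (1-r) * ‖y‖ := by
        rw [ha, hdecomp]
        calc ‖(x - r • y) - (1-r) • y‖ ≤ ‖x - r • y‖ + ‖(1-r) • y‖ := norm_sub_le _ _
          _ = u + (1-r) * ‖y‖ := by
              rw [norm_smul, Real.norm_eq_abs, abs_of_nonneg (by linarith [hr.2] : (0:ℝ) ≤ 1 - r)]
      have hry : (1-r) * ‖y‖ ≤ a/2 := by
        have h1 : (0:ℝ) ≤ 1 - r := by linarith [hr.2]
        have h2 : (1-r) * ‖y‖ ≤ (a^2/4) * (2/a) := by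
          apply mul_le_mul h1r.le hy2 (norm_nonneg _) (by positivity)
        calc (1-r) * ‖y‖ ≤ (a^2/4) * (2/a) := h2
          _ = a/2 := by field_simp; ring
      have hua : a/2 ≤ u := by linarith
      have hu2 : a^2/4 ≤ u^2 := by nlinarith
      have hwcmp : a^2/(8*t) ≤ u^2/(2*t) := by
        rw [div_le_div_iff₀ (by linarith) (by linarith)]
        nlinarith
      have hexp : Real.exp (-(u^2/(2*t))) ≤ Real.exp (-(a^2/(8*t))) :=
        Real.exp_le_exp.2 (by linarith)
      -- the key bound : t ^ (-β) * exp (-(a^2/(8*t))) ≤ C2 * 8^β * a^(-(2*β))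
      have hbnd : t ^ (-β) * Real.exp (-(a^2/(8*t))) ≤ C2 * 8 ^ β * a ^ (-(2*β)) := by
        have hb := hC2 (a^2/(8*t)) (by positivity)
        have hA : (0:ℝ) < a ^ (2*β) := Real.rpow_pos_of_pos ha0 _
        have hT : (0:ℝ) < t ^ β := Real.rpow_pos_of_pos ht0 _
        have hrw : (a^2/(8*t)) ^ β = a ^ (2*β) / (8 ^ β * t ^ β) := by
          rw [Real.div_rpow (by positivity) (by positivity),
            Real.mul_rpow (by norm_num) ht0.le]
          congr 1
          rw [← Real.rpow_natCast a 2, ← Real.rpow_mul ha0.le, show ((2:ℕ):ℝ) * β = 2*β by push_cast; ring]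
        rw [hrw] at hb
        rw [div_mul_eq_mul_div, div_le_iff₀ (by positivity)] at hb
        -- hb : a^(2β) * exp(-(a²/(8t))) ≤ C2 * (8^β * t^β)
        rw [Real.rpow_neg ht0.le, Real.rpow_neg ha0.le]
        rw [inv_mul_eq_div, div_le_iff₀ hT]
        have hrw2 : C2 * 8 ^ β * (a ^ (2*β))⁻¹ * t ^ β = (C2 * 8 ^ β * t ^ β) / (a ^ (2*β)) := by
          field_simp
        rw [hrw2, le_div_iff₀ hA]
        nlinarith [hb]
      calc u ^ ν * t ^ (-(((n : ℝ) + μ) / 2)) * Real.exp (-u ^ 2 / t)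
          ≤ K * t ^ (-β) * Real.exp (-(u^2/(2*t))) := step1
        _ ≤ K * t ^ (-β) * Real.exp (-(a^2/(8*t))) := by
            have := Real.rpow_nonneg ht0.le (-β)
            gcongr
        _ = K * (t ^ (-β) * Real.exp (-(a^2/(8*t)))) := by ring
        _ ≤ K * (C2 * 8 ^ β * a ^ (-(2*β))) := mul_le_mul_of_nonneg_left hbnd hK0.le
        _ = c3 * a ^ (-(2*β)) := by rw [hc3]; ring
  -- part 2 : integral machinery
  have hf0 : 0 ≤ᵐ[volume.restrict (Set.Ioo (0:ℝ) 1)]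
      (fun r => ‖x - r • y‖ ^ ν * (1 - r ^ 2) ^ (-(((n : ℝ) + μ) / 2)) *
        Real.exp (-‖x - r • y‖ ^ 2 / (1 - r ^ 2))) := by
    filter_upwards [ae_restrict_mem measurableSet_Ioo] with r hr
    have ht0 : (0:ℝ) ≤ 1 - r^2 := by nlinarith [hr.1, hr.2]
    exact mul_nonneg (mul_nonneg (Real.rpow_nonneg (norm_nonneg _) _)
      (Real.rpow_nonneg ht0 _)) (Real.exp_pos _).le
  have hint1 : IntegrableOn (fun r => K * (1-r) ^ (-β)) (Set.Ioc 0 m) volume := by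
    have hc : ContinuousOn (fun r : ℝ => K * (1-r) ^ (-β)) (Set.Icc 0 m) := by
      apply ContinuousOn.mul continuousOn_const
      apply ContinuousOn.rpow_const (continuousOn_const.sub continuousOn_id)
      intro r hr
      left
      have h1 : (0:ℝ) < 1 - r := by linarith [hr.2, hm1]
      exact h1.ne'
    exact hc.integrableOn_Icc.mono_set Set.Ioc_subset_Icc_self
  have hint2 : IntegrableOn (fun _ : ℝ => c3 * a ^ (-(2*β))) (Set.Ioo m 1) volume :=
    integrableOn_const measure_Ioo_lt_top.ne
  have hgeq1 : Set.EqOn (fun r => K * (1-r) ^ (-β)) g (Set.Ioc 0 m) := by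
    intro r hr
    simp only [hg]
    rw [if_pos hr.2]
  have hgeq2 : Set.EqOn (fun _ : ℝ => c3 * a ^ (-(2*β))) g (Set.Ioo m 1) := by
    intro r hr
    simp only [hg]
    rw [if_neg (not_le.2 hr.1)]
  have hgint1 : IntegrableOn g (Set.Ioc 0 m) := hint1.congr_fun hgeq1 measurableSet_Ioc
  have hgint2 : IntegrableOn g (Set.Ioo m 1) := hint2.congr_fun hgeq2 measurableSet_Ioo
  have hunion : Set.Ioc (0:ℝ) m ∪ Set.Ioo m 1 = Set.Ioo 0 1 := Set.Ioc_union_Ioo_eq_Ioo hm0 hm1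
  have hgint : IntegrableOn g (Set.Ioo (0:ℝ) 1) := by
    rw [← hunion]
    exact hgint1.union hgint2
  have hmono : (∫ r in Set.Ioo (0:ℝ) 1,
      ‖x - r • y‖ ^ ν * (1 - r ^ 2) ^ (-(((n : ℝ) + μ) / 2)) *
        Real.exp (-‖x - r • y‖ ^ 2 / (1 - r ^ 2))) ≤ ∫ r in Set.Ioo (0:ℝ) 1, g r := by
    apply integral_mono_of_nonneg hf0 hgint
    filter_upwards [ae_restrict_mem measurableSet_Ioo] with r hr using key r hr
  have hdisj : Disjoint (Set.Ioc (0:ℝ) m) (Set.Ioo m 1) := by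
    apply Set.disjoint_left.2
    rintro r ⟨_, h1⟩ ⟨h2, _⟩
    exact absurd h1 (not_le.2 h2)
  have hsplit : (∫ r in Set.Ioo (0:ℝ) 1, g r) =
      (∫ r in Set.Ioc (0:ℝ) m, g r) + ∫ r in Set.Ioo m 1, g r := by
    rw [← hunion]
    exact setIntegral_union hdisj measurableSet_Ioo hgint1 hgint2
  set P : ℝ := a ^ (2 - 2*β) with hP
  have hP0 : 0 < P := Real.rpow_pos_of_pos ha0 _
  have hPval : ((1:ℝ) - m) ^ ((1:ℝ) - β) = 4 ^ (β - 1) * P := by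
    have h1m : (1:ℝ) - m = a^2/4 := by rw [hm]; ring
    rw [h1m, Real.div_rpow (by positivity) (by norm_num),
      ← Real.rpow_natCast a 2, ← Real.rpow_mul ha0.le,
      show ((2:ℕ):ℝ) * (1 - β) = 2 - 2*β by push_cast; ring,
      show (1:ℝ) - β = -(β-1) by ring, Real.rpow_neg (by norm_num : (0:ℝ) ≤ 4), hP]
    field_simp
  have hp1 : (∫ r in Set.Ioc (0:ℝ) m, g r) ≤ K * 4 ^ (β-1) / (β-1) * P := by
    rw [← setIntegral_congr_fun measurableSet_Ioc hgeq1,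
      ← intervalIntegral.integral_of_le hm0, intervalIntegral.integral_const_mul]
    have hcomp : (∫ r in (0:ℝ)..m, (1-r) ^ (-β)) = ∫ u in (1-m)..(1-(0:ℝ)), u ^ (-β) :=
      intervalIntegral.integral_comp_sub_left (fun u => u ^ (-β)) 1
    have h1m0 : (0:ℝ) < 1 - m := by linarith
    have hval : (∫ u in (1-m)..(1-(0:ℝ)), u ^ (-β)) =
        ((1-(0:ℝ)) ^ (-β+1) - (1-m) ^ (-β+1)) / (-β+1) := by
      apply integral_rpow
      right
      constructor
      · intro hcon
        have : β = 1 := by linarith [neg_injective hcon]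
        linarith
      · apply Set.notMem_uIcc_of_lt h1m0
        norm_num
    rw [hcomp, hval]
    have h1 : ((1:ℝ)-(0:ℝ)) ^ (-β+1) = 1 := by
      norm_num
    rw [h1]
    have h2 : ((1:ℝ)-m) ^ (-β+1) = 4 ^ (β-1) * P := by
      rw [show -β+1 = (1:ℝ) - β by ring]
      exact hPval
    rw [h2]
    have h3 : (1 - 4 ^ (β-1) * P) / (-β+1) = (4 ^ (β-1) * P - 1) / (β-1) := by
      rw [div_eq_div_iff (by linarith) (by linarith)]
      ring
    rw [h3]
    have h4 : (4 ^ (β-1) * P - 1) / (β-1) ≤ (4 ^ (β-1) * P) / (β-1) := by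
      gcongr
      · linarith
    calc K * ((4 ^ (β-1) * P - 1) / (β-1)) ≤ K * ((4 ^ (β-1) * P) / (β-1)) :=
          mul_le_mul_of_nonneg_left h4 hK0.le
      _ = K * 4 ^ (β-1) / (β-1) * P := by ring
  have hp2 : (∫ r in Set.Ioo m 1, g r) ≤ K * C2 * 8 ^ β / 4 * P := by
    rw [← setIntegral_congr_fun measurableSet_Ioo hgeq2, setIntegral_const,
      Real.volume_real_Ioo, max_eq_left (by linarith), smul_eq_mul]
    have h1m : (1:ℝ) - m = a^2/4 := by rw [hm]; ring
    have hexp2 : a^2 * a ^ (-(2*β)) = P := by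
      rw [← Real.rpow_natCast a 2, ← Real.rpow_add ha0, hP]
      norm_num [sub_eq_add_neg]
    rw [h1m]
    calc a^2/4 * (c3 * a ^ (-(2*β))) = c3 / 4 * (a^2 * a ^ (-(2*β))) := by ring
      _ = c3 / 4 * P := by rw [hexp2]
      _ ≤ K * C2 * 8 ^ β / 4 * P := le_of_eq (by rw [hc3])
  have hfin : (∫ r in Set.Ioo (0:ℝ) 1,
      ‖x - r • y‖ ^ ν * (1 - r ^ 2) ^ (-(((n : ℝ) + μ) / 2)) *
        Real.exp (-‖x - r • y‖ ^ 2 / (1 - r ^ 2))) ≤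
      (K * 4 ^ (β-1) / (β-1) + K * C2 * 8 ^ β / 4) * P := by
    rw [hsplit] at hmono
    nlinarith [hp1, hp2]
  have hexpeq : P = a ^ (-((n:ℝ) + μ - ν - 2)) := by
    rw [hP]
    congr 1
    rw [hβ]
    ring
  rw [hexpeq] at hfin
  rw [hc3]
  linarith [hfin]
end

section
/- Let n ≥ 1 and let α ∈ ℕ^n be a nonzero multi-index. Then there is a constant C (depending only on n and α) such that |K_α(x,y)| ≤ C |x−y|^{−n} for every (x,y) ∈ N_2 with x ≠ y. -/
open MeasureTheory Real Filter Set

section Aux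

lemma gauss_deriv_poly (k : ℕ) : ∃ p : Polynomial ℝ, ∀ s : ℝ,
    iteratedDeriv k (fun t => Real.exp (-t ^ 2)) s = p.eval s * Real.exp (-s ^ 2) := by
  induction k with
  | zero => exact ⟨1, fun s => by simp [iteratedDeriv_zero]⟩
  | succ k ih =>
    obtain ⟨p, hp⟩ := ih
    refine ⟨p.derivative - Polynomial.C 2 * Polynomial.X * p, fun s => ?_⟩
    rw [iteratedDeriv_succ]
    have hfun : iteratedDeriv k (fun t => Real.exp (-t ^ 2)) =
        fun s => p.eval s * Real.exp (-s ^ 2) := funext hp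
    rw [hfun]
    have h1 : HasDerivAt (fun s : ℝ => p.eval s * Real.exp (-s ^ 2))
        (p.derivative.eval s * Real.exp (-s ^ 2) + p.eval s * ((-2 * s) * Real.exp (-s ^ 2))) s := by
      have hg : HasDerivAt (fun s : ℝ => Real.exp (-s ^ 2)) ((-2 * s) * Real.exp (-s ^ 2)) s := by
        have h2 : HasDerivAt (fun s : ℝ => -s ^ 2) (-2 * s) s := by
          simpa [Pi.neg_def] using ((hasDerivAt_pow 2 s).neg)
        simpa [mul_comm] using h2.exp
      exact (Polynomial.hasDerivAt p s).mul hg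
    rw [h1.deriv]
    simp [Polynomial.eval_mul, Polynomial.eval_sub]
    ring

lemma poly_growth (p : Polynomial ℝ) : ∃ M : ℝ, 0 ≤ M ∧ ∀ s : ℝ,
    |p.eval s| ≤ M * Real.exp (s ^ 2 / 2) := by
  refine ⟨∑ i ∈ Finset.range (p.natDegree + 1), |p.coeff i| * (1 + 2 ^ i * i.factorial), ?_, ?_⟩
  · apply Finset.sum_nonneg; intro i _; positivity
  intro s
  have hexp : (0:ℝ) < Real.exp (s ^ 2 / 2) := Real.exp_pos _
  rw [Finset.sum_mul]
  calc |p.eval s| ≤ ∑ i ∈ Finset.range (p.natDegree + 1), |p.coeff i * s ^ i| := by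
        rw [Polynomial.eval_eq_sum_range]; exact Finset.abs_sum_le_sum_abs _ _
    _ ≤ ∑ i ∈ Finset.range (p.natDegree + 1),
        |p.coeff i| * (1 + 2 ^ i * i.factorial) * Real.exp (s ^ 2 / 2) := by
        apply Finset.sum_le_sum
        intro i _
        rw [abs_mul, abs_pow]
        have hpow : |s| ^ i ≤ (1 + 2 ^ i * i.factorial) * Real.exp (s ^ 2 / 2) := by
          rcases le_total |s| 1 with h | h
          · calc |s| ^ i ≤ 1 := pow_le_one₀ (abs_nonneg s) h
              _ ≤ (1 + 2 ^ i * i.factorial) * Real.exp (s ^ 2 / 2) := by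
                  nlinarith [Real.one_le_exp (by positivity : (0:ℝ) ≤ s ^ 2 / 2),
                    (by positivity : (0:ℝ) ≤ (2:ℝ) ^ i * i.factorial)]
          · have h1 : |s| ^ i ≤ (s ^ 2 / 2) ^ i * 2 ^ i := by
              rw [← mul_pow]
              have : s ^ 2 / 2 * 2 = s ^ 2 := by ring
              rw [this]
              apply pow_le_pow_left₀ (abs_nonneg s)
              nlinarith [sq_abs s]
            have h2 : (s ^ 2 / 2) ^ i ≤ i.factorial * Real.exp (s ^ 2 / 2) := by
              have := Real.pow_div_factorial_le_exp (x := s ^ 2 / 2) (by positivity) i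
              rw [div_le_iff₀ (by positivity : (0:ℝ) < (i.factorial:ℝ))] at this
              linarith [this]
            calc |s| ^ i ≤ (s ^ 2 / 2) ^ i * 2 ^ i := h1
              _ ≤ i.factorial * Real.exp (s ^ 2 / 2) * 2 ^ i := by
                  apply mul_le_mul_of_nonneg_right h2; positivity
              _ ≤ (1 + 2 ^ i * i.factorial) * Real.exp (s ^ 2 / 2) := by
                  nlinarith [hexp.le, (by positivity : (0:ℝ) ≤ (2:ℝ) ^ i * i.factorial)]
        rw [mul_assoc]
        exact mul_le_mul_of_nonneg_left hpow (abs_nonneg _)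

lemma hermite_bound (k : ℕ) : ∃ M : ℝ, 0 ≤ M ∧ ∀ s : ℝ,
    |hermiteH k s| ≤ M * Real.exp (s ^ 2 / 2) := by
  obtain ⟨p, hp⟩ := gauss_deriv_poly k
  obtain ⟨M, hM0, hM⟩ := poly_growth p
  refine ⟨M, hM0, fun s => ?_⟩
  have : hermiteH k s = (-1 : ℝ) ^ k * p.eval s := by
    have he : Real.exp (s ^ 2) * Real.exp (-s ^ 2) = 1 := by
      rw [← Real.exp_add]; simp
    rw [hermiteH, hp s]
    calc (-1 : ℝ) ^ k * Real.exp (s ^ 2) * (p.eval s * Real.exp (-s ^ 2))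
        = (-1 : ℝ) ^ k * p.eval s * (Real.exp (s ^ 2) * Real.exp (-s ^ 2)) := by ring
      _ = (-1 : ℝ) ^ k * p.eval s := by rw [he, mul_one]
  rw [this, abs_mul, abs_pow, abs_neg, abs_one, one_pow, one_mul]
  exact hM s

lemma hermite_prod_bound {n : ℕ} (α : Fin n → ℕ) : ∃ M : ℝ, 0 ≤ M ∧ ∀ z : Fin n → ℝ,
    |∏ j, hermiteH (α j) (z j)| ≤ M * Real.exp ((∑ j, (z j) ^ 2) / 2) := by
  have h : ∀ j : Fin n, ∃ M : ℝ, 0 ≤ M ∧ ∀ s : ℝ, |hermiteH (α j) s| ≤ M * Real.exp (s ^ 2 / 2) :=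
    fun j => hermite_bound (α j)
  choose M hM0 hM using h
  refine ⟨∏ j, M j, Finset.prod_nonneg fun j _ => hM0 j, fun z => ?_⟩
  rw [Finset.abs_prod]
  calc ∏ j, |hermiteH (α j) (z j)| ≤ ∏ j, M j * Real.exp ((z j) ^ 2 / 2) :=
        Finset.prod_le_prod (fun j _ => abs_nonneg _) (fun j _ => hM j (z j))
    _ = (∏ j, M j) * ∏ j, Real.exp ((z j) ^ 2 / 2) := Finset.prod_mul_distrib
    _ = (∏ j, M j) * Real.exp ((∑ j, (z j) ^ 2) / 2) := by
        rw [← Real.exp_sum, ← Finset.sum_div]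

lemma logbound1 (a : ℝ) : ∃ c : ℝ, 0 ≤ c ∧ ∀ r ∈ Set.Ioc (0:ℝ) 2⁻¹,
    (-Real.log r) ^ a ≤ c * r ^ (-(1/2) : ℝ) := by
  rcases le_or_gt 0 a with ha | ha
  · set ε : ℝ := 1 / (2 * (a + 1)) with hε
    have hεpos : 0 < ε := by positivity
    refine ⟨(1/ε) ^ a, by positivity, fun r hr => ?_⟩
    obtain ⟨hr0, hr2⟩ := hr
    have hr1 : r < 1 := lt_of_le_of_lt hr2 (by norm_num)
    have hlogpos : 0 ≤ -Real.log r := by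
      have := Real.log_nonpos (le_of_lt hr0) (le_of_lt hr1)
      linarith
    have hkey : -Real.log r ≤ (1/ε) * r ^ (-ε) := by
      have h1 : -Real.log r = Real.log r⁻¹ := (Real.log_inv r).symm
      have h2 : Real.log r⁻¹ = Real.log ((r⁻¹) ^ ε) / ε := by
        rw [Real.log_rpow (by positivity)]; field_simp
      have h3 : Real.log ((r⁻¹) ^ ε) ≤ (r⁻¹) ^ ε := by
        have := Real.log_le_sub_one_of_pos (by positivity : (0:ℝ) < (r⁻¹) ^ ε)
        linarith
      have h4 : (r⁻¹ : ℝ) ^ ε = r ^ (-ε) := by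
        rw [Real.inv_rpow (le_of_lt hr0), Real.rpow_neg (le_of_lt hr0)]
      rw [h1, h2, ← h4]
      rw [div_le_iff₀ hεpos]
      calc Real.log ((r⁻¹) ^ ε) ≤ (r⁻¹) ^ ε := h3
        _ = 1 / ε * (r⁻¹) ^ ε * ε := by field_simp
    have hstep : (-Real.log r) ^ a ≤ ((1/ε) * r ^ (-ε)) ^ a :=
      Real.rpow_le_rpow hlogpos hkey ha
    have hsplit : ((1/ε) * r ^ (-ε)) ^ a = (1/ε) ^ a * r ^ (-ε * a) := by
      rw [Real.mul_rpow (by positivity) (Real.rpow_nonneg (le_of_lt hr0) _),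
        ← Real.rpow_mul (le_of_lt hr0)]
    have hexpo : r ^ (-ε * a) ≤ r ^ (-(1/2) : ℝ) := by
      apply Real.rpow_le_rpow_of_exponent_ge hr0 (le_of_lt hr1)
      have : ε * a ≤ 1/2 := by
        rw [hε, div_mul_eq_mul_div, div_le_iff₀ (by positivity)]
        nlinarith
      linarith
    calc (-Real.log r) ^ a ≤ (1/ε) ^ a * r ^ (-ε * a) := hstep.trans_eq hsplit
      _ ≤ (1/ε) ^ a * r ^ (-(1/2) : ℝ) := by
          apply mul_le_mul_of_nonneg_left hexpo (by positivity)
  · refine ⟨(2:ℝ) ^ (-a), by positivity, fun r hr => ?_⟩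
    obtain ⟨hr0, hr2⟩ := hr
    have hr1 : r < 1 := lt_of_le_of_lt hr2 (by norm_num)
    have hlog : 2⁻¹ ≤ -Real.log r := by
      have := Real.log_le_sub_one_of_pos hr0
      have h2 : r ≤ 2⁻¹ := hr2
      linarith
    have h1 : (-Real.log r) ^ a ≤ (2⁻¹ : ℝ) ^ a :=
      Real.rpow_le_rpow_of_nonpos (by norm_num) hlog (le_of_lt ha)
    have h2 : ((2:ℝ)⁻¹) ^ a = (2:ℝ) ^ (-a) := by
      rw [Real.inv_rpow (by norm_num), ← Real.rpow_neg (by norm_num)]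
    have h3 : (1:ℝ) ≤ r ^ (-(1/2) : ℝ) := by
      have := Real.rpow_le_rpow_of_exponent_ge hr0 (le_of_lt hr1) (by norm_num : -(1/2:ℝ) ≤ 0)
      simpa using this
    calc (-Real.log r) ^ a ≤ (2:ℝ) ^ (-a) := h1.trans_eq h2
      _ ≤ (2:ℝ) ^ (-a) * r ^ (-(1/2) : ℝ) := le_mul_of_one_le_right (by positivity) h3

lemma logbound2 (a : ℝ) : ∃ c : ℝ, 0 ≤ c ∧ ∀ r ∈ Set.Ioo (2⁻¹:ℝ) 1,
    (-Real.log r) ^ a ≤ c * (1 - r ^ 2) ^ a := by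
  rcases le_or_gt 0 a with ha | ha
  · refine ⟨(2:ℝ) ^ a, by positivity, fun r hr => ?_⟩
    obtain ⟨hr0, hr1⟩ := hr
    have hrpos : (0:ℝ) < r := lt_trans (by norm_num) hr0
    have hu : (0:ℝ) < 1 - r ^ 2 := by nlinarith
    have hkey : -Real.log r ≤ 2 * (1 - r ^ 2) := by
      have h1 : Real.log r⁻¹ ≤ r⁻¹ - 1 := by
        have := Real.log_le_sub_one_of_pos (by positivity : (0:ℝ) < r⁻¹)
        linarith
      have h2 : -Real.log r = Real.log r⁻¹ := (Real.log_inv r).symm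
      have h3 : r⁻¹ - 1 ≤ 2 * (1 - r) := by
        rw [inv_eq_one_div, div_sub' (ne_of_gt hrpos), div_le_iff₀ hrpos]
        nlinarith
      have h4 : 2 * (1 - r) ≤ 2 * (1 - r ^ 2) := by nlinarith
      linarith
    have hlogpos : 0 ≤ -Real.log r := by
      have := Real.log_nonpos (le_of_lt hrpos) (le_of_lt hr1)
      linarith
    calc (-Real.log r) ^ a ≤ (2 * (1 - r ^ 2)) ^ a := Real.rpow_le_rpow hlogpos hkey ha
      _ = (2:ℝ) ^ a * (1 - r ^ 2) ^ a := Real.mul_rpow (by norm_num) (le_of_lt hu)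
  · refine ⟨(2:ℝ) ^ (-a), by positivity, fun r hr => ?_⟩
    obtain ⟨hr0, hr1⟩ := hr
    have hrpos : (0:ℝ) < r := lt_trans (by norm_num) hr0
    have hu : (0:ℝ) < 1 - r ^ 2 := by nlinarith
    have hkey : (1 - r ^ 2) / 2 ≤ -Real.log r := by
      have h1 : Real.log r ≤ r - 1 := by
        have := Real.log_le_sub_one_of_pos hrpos
        linarith
      nlinarith
    have h2 : (-Real.log r) ^ a ≤ ((1 - r ^ 2) / 2) ^ a :=
      Real.rpow_le_rpow_of_nonpos (by positivity) hkey (le_of_lt ha)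
    have h3 : ((1 - r ^ 2) / 2) ^ a = (1 - r ^ 2) ^ a * ((2:ℝ))⁻¹ ^ a := by
      rw [div_eq_mul_inv, Real.mul_rpow (le_of_lt hu) (by norm_num)]
    have h4 : ((2:ℝ))⁻¹ ^ a = (2:ℝ) ^ (-a) := by
      rw [Real.inv_rpow (by norm_num), ← Real.rpow_neg (by norm_num)]
    calc (-Real.log r) ^ a ≤ (1 - r ^ 2) ^ a * ((2:ℝ))⁻¹ ^ a := h2.trans_eq h3
      _ = (2:ℝ) ^ (-a) * (1 - r ^ 2) ^ a := by rw [h4]; ring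

lemma norm_sq_coords {n : ℕ} (v : EuclideanSpace ℝ (Fin n)) : ‖v‖ ^ 2 = ∑ j, (v j) ^ 2 := by
  rw [EuclideanSpace.norm_eq, Real.sq_sqrt (by positivity)]
  simp [Real.norm_eq_abs, sq_abs]

lemma S_lower {n : ℕ} (x y : EuclideanSpace ℝ (Fin n)) (hN2 : ‖x - y‖ * ‖y‖ ≤ 2)
    {r : ℝ} (hr0 : 0 ≤ r) (hr1 : r ≤ 1) :
    ‖x - y‖ ^ 2 - 4 * (1 - r) ≤ ‖x - r • y‖ ^ 2 := by
  have hxy : x - r • y = (x - y) + (1 - r) • y := by module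
  rw [hxy, norm_add_sq_real]
  have hinner : inner ℝ (x - y) ((1 - r) • y) = (1 - r) * (inner ℝ (x - y) y : ℝ) :=
    real_inner_smul_right _ _ _
  have habs : |(inner ℝ (x - y) y : ℝ)| ≤ ‖x - y‖ * ‖y‖ := abs_real_inner_le_norm _ _
  have h2 : -2 ≤ (inner ℝ (x - y) y : ℝ) := by
    have := neg_abs_le (inner ℝ (x - y) y : ℝ)
    linarith [habs, hN2]
  have hnn : (0:ℝ) ≤ ‖(1 - r) • y‖ ^ 2 := by positivity
  rw [hinner]
  nlinarith [h2, sub_nonneg.mpr hr1]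

lemma step1 {n : ℕ} (α : Fin n → ℕ) (Mh : ℝ) (hMh0 : 0 ≤ Mh)
    (hMh : ∀ z : Fin n → ℝ, |∏ j, hermiteH (α j) (z j)| ≤ Mh * Real.exp ((∑ j, (z j) ^ 2) / 2))
    (x y : EuclideanSpace ℝ (Fin n)) (hN2 : ‖x - y‖ * ‖y‖ ≤ 2)
    {r : ℝ} (hr : r ∈ Set.Ioo (0:ℝ) 1) :
    |∏ j, hermiteH (α j) ((x j - r * y j) / Real.sqrt (1 - r ^ 2))| *
      Real.exp (-‖x - r • y‖ ^ 2 / (1 - r ^ 2)) ≤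
    Mh * Real.exp 2 * Real.exp (-‖x - y‖ ^ 2 / (2 * (1 - r ^ 2))) := by
  obtain ⟨hr0, hr1⟩ := hr
  set u := 1 - r ^ 2 with hu_def
  have hu : (0:ℝ) < u := by rw [hu_def]; nlinarith
  set S := ‖x - r • y‖ ^ 2 with hS_def
  set t := ‖x - y‖ with ht_def
  have hz : (∑ j, ((x j - r * y j) / Real.sqrt u) ^ 2) = S / u := by
    have hcoord : S = ∑ j, (x j - r * y j) ^ 2 := by
      rw [hS_def, norm_sq_coords]
      refine Finset.sum_congr rfl fun j _ => ?_
      simp [PiLp.sub_apply, PiLp.smul_apply, smul_eq_mul]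
    rw [hcoord, Finset.sum_div]
    refine Finset.sum_congr rfl fun j _ => ?_
    rw [div_pow, Real.sq_sqrt (le_of_lt hu)]
  have hP := hMh (fun j => (x j - r * y j) / Real.sqrt u)
  rw [hz] at hP
  have hexp_comb : Real.exp (S / u / 2) * Real.exp (-S / u) = Real.exp (-S / (2 * u)) := by
    rw [← Real.exp_add]
    congr 1
    field_simp
    ring
  have hSlow : t ^ 2 - 4 * (1 - r) ≤ S := S_lower x y hN2 (le_of_lt hr0) (le_of_lt hr1)
  have hexp_mono : Real.exp (-S / (2 * u)) ≤ Real.exp 2 * Real.exp (-t ^ 2 / (2 * u)) := by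
    rw [← Real.exp_add]
    apply Real.exp_le_exp.mpr
    have hfrac : 4 * (1 - r) / (2 * u) ≤ 2 := by
      rw [div_le_iff₀ (by positivity)]
      rw [hu_def]; nlinarith
    have hstep : -S / (2 * u) ≤ (-t ^ 2 + 4 * (1 - r)) / (2 * u) := by
      apply div_le_div_of_nonneg_right ?_ (by positivity)
      · linarith
    calc -S / (2 * u) ≤ (-t ^ 2 + 4 * (1 - r)) / (2 * u) := hstep
      _ = -t ^ 2 / (2 * u) + 4 * (1 - r) / (2 * u) := by ring
      _ ≤ 2 + -t ^ 2 / (2 * u) := by linarith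
  calc |∏ j, hermiteH (α j) ((x j - r * y j) / Real.sqrt u)| * Real.exp (-S / u)
      ≤ Mh * Real.exp (S / u / 2) * Real.exp (-S / u) := by
        apply mul_le_mul_of_nonneg_right hP (le_of_lt (Real.exp_pos _))
    _ = Mh * Real.exp (-S / (2 * u)) := by rw [mul_assoc, hexp_comb]
    _ ≤ Mh * (Real.exp 2 * Real.exp (-t ^ 2 / (2 * u))) :=
        mul_le_mul_of_nonneg_left hexp_mono hMh0
    _ = Mh * Real.exp 2 * Real.exp (-t ^ 2 / (2 * u)) := by ring

end Aux

set_option maxHeartbeats 12800000 in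
lemma integral_bound {n : ℕ} (hn : 1 ≤ n) (α : Fin n → ℕ) (hN1 : 1 ≤ ∑ j, α j) :
    ∃ D : ℝ, ∀ x y : EuclideanSpace ℝ (Fin n), ‖x - y‖ ≤ 2 / (1 + ‖x‖ + ‖y‖) → x ≠ y →
      |∫ r in Set.Ioo (0 : ℝ) 1,
          r ^ (n - 1) * (-Real.log r) ^ (((∑ j, α j : ℕ) : ℝ) / 2 - 1) *
            (1 - r ^ 2) ^ (-(((n : ℝ) + ((∑ j, α j : ℕ) : ℝ)) / 2)) *
            (∏ j, hermiteH (α j) ((x j - r * y j) / Real.sqrt (1 - r ^ 2))) *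
            Real.exp (-‖x - r • y‖ ^ 2 / (1 - r ^ 2))| ≤ D / ‖x - y‖ ^ n := by
  classical
  obtain ⟨Mh, hMh0, hMh⟩ := hermite_prod_bound α
  set N : ℕ := ∑ j, α j with hNdef
  set a : ℝ := (N : ℝ) / 2 - 1 with hadef
  set b : ℝ := ((n : ℝ) + (N : ℝ)) / 2 with hbdef
  have hb0 : (0:ℝ) ≤ b := by rw [hbdef]; positivity
  obtain ⟨c₁, hc₁0, hc₁⟩ := logbound1 a
  obtain ⟨c₂, hc₂0, hc₂⟩ := logbound2 a
  set e2 : ℝ := Real.exp 2 with he2def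
  have he20 : (0:ℝ) ≤ e2 := le_of_lt (Real.exp_pos 2)
  set K34 : ℝ := ((3:ℝ)/4) ^ (-b) with hK34def
  have hK340 : (0:ℝ) ≤ K34 := Real.rpow_nonneg (by norm_num) _
  set B₁ : ℝ := Mh * e2 * c₁ * K34 * 2 ^ n with hB₁def
  set B₂ : ℝ := Mh * e2 * c₂ * (n + 2).factorial * 2 ^ (n + 2) with hB₂def
  set B₃ : ℝ := Mh * e2 * c₂ with hB₃def
  have hB₁0 : 0 ≤ B₁ := by
    rw [hB₁def]
    exact mul_nonneg (mul_nonneg (mul_nonneg (mul_nonneg hMh0 he20) hc₁0) hK340) (by positivity)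
  have hB₂0 : 0 ≤ B₂ := by
    rw [hB₂def]
    exact mul_nonneg (mul_nonneg (mul_nonneg (mul_nonneg hMh0 he20) hc₂0) (by positivity))
      (by positivity)
  have hB₃0 : 0 ≤ B₃ := by
    rw [hB₃def]; exact mul_nonneg (mul_nonneg hMh0 he20) hc₂0
  refine ⟨2 * B₁ + B₂ + 4 * B₃, fun x y hmem hxy => ?_⟩
  set t : ℝ := ‖x - y‖ with htdef
  have ht0 : 0 < t := by
    rw [htdef]; exact norm_pos_iff.mpr (sub_ne_zero.mpr hxy)
  have hDpos : (0:ℝ) < 1 + ‖x‖ + ‖y‖ := by positivity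
  have ht2 : t ≤ 2 :=
    le_trans hmem (div_le_self (by norm_num) (by linarith [norm_nonneg x, norm_nonneg y]))
  have hN2 : t * ‖y‖ ≤ 2 := by
    have h1 : t * (1 + ‖x‖ + ‖y‖) ≤ 2 := by
      rw [← le_div_iff₀ hDpos]; exact hmem
    nlinarith [norm_nonneg x, norm_nonneg y, ht0.le]
  have htn : (0:ℝ) < t ^ n := pow_pos ht0 n
  set F : ℝ → ℝ := fun r =>
    r ^ (n - 1) * (-Real.log r) ^ a * (1 - r ^ 2) ^ (-b) *
      (∏ j, hermiteH (α j) ((x j - r * y j) / Real.sqrt (1 - r ^ 2))) *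
      Real.exp (-‖x - r • y‖ ^ 2 / (1 - r ^ 2)) with hFdef
  set m2 : ℝ := max 2⁻¹ (1 - t ^ 2) with hm2def
  set m3 : ℝ := max 2⁻¹ (1 - t ^ 2 / 2) with hm3def
  have hm3le1 : m3 ≤ 1 := by
    rw [hm3def]; apply max_le (by norm_num); nlinarith
  set g₁ : ℝ → ℝ := (Set.Ioc (0:ℝ) 2⁻¹).indicator (fun r => B₁ / t ^ n * r ^ (-(1/2) : ℝ))
    with hg₁def
  set g₂ : ℝ → ℝ := (Set.Ioo m2 (1:ℝ)).indicator (fun _ => B₂ / t ^ (n + 2)) with hg₂def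
  set g₃ : ℝ → ℝ := (Set.Ioo (2⁻¹:ℝ) m3).indicator
    (fun r => B₃ / t ^ (n - 1) * (1 - r) ^ (-(3/2) : ℝ)) with hg₃def
  have hpt : ∀ r ∈ Set.Ioo (0:ℝ) 1, ‖F r‖ ≤ g₁ r + g₂ r + g₃ r := by
    intro r hr
    obtain ⟨hr0, hr1⟩ := hr
    have hu : (0:ℝ) < 1 - r ^ 2 := by nlinarith
    have hlog : (0:ℝ) < -Real.log r := by
      have := Real.log_neg hr0 hr1
      linarith
    have hW := step1 α Mh hMh0 hMh x y hN2 ⟨hr0, hr1⟩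
    rw [← htdef, ← he2def] at hW
    have hPE0 : 0 ≤ |∏ j, hermiteH (α j) ((x j - r * y j) / Real.sqrt (1 - r ^ 2))| *
        Real.exp (-‖x - r • y‖ ^ 2 / (1 - r ^ 2)) :=
      mul_nonneg (abs_nonneg _) (le_of_lt (Real.exp_pos _))
    have hexp1 : Real.exp (-t ^ 2 / (2 * (1 - r ^ 2))) ≤ 1 := by
      have h0 : -t ^ 2 / (2 * (1 - r ^ 2)) ≤ 0 :=
        div_nonpos_of_nonpos_of_nonneg (by nlinarith [sq_nonneg t]) (by positivity)
      calc Real.exp (-t ^ 2 / (2 * (1 - r ^ 2))) ≤ Real.exp 0 := Real.exp_le_exp.mpr h0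
        _ = 1 := Real.exp_zero
    have hWb : |∏ j, hermiteH (α j) ((x j - r * y j) / Real.sqrt (1 - r ^ 2))| *
        Real.exp (-‖x - r • y‖ ^ 2 / (1 - r ^ 2)) ≤ Mh * e2 := by
      calc |∏ j, hermiteH (α j) ((x j - r * y j) / Real.sqrt (1 - r ^ 2))| *
          Real.exp (-‖x - r • y‖ ^ 2 / (1 - r ^ 2))
          ≤ Mh * e2 * Real.exp (-t ^ 2 / (2 * (1 - r ^ 2))) := hW
        _ ≤ Mh * e2 * 1 := mul_le_mul_of_nonneg_left hexp1 (mul_nonneg hMh0 he20)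
        _ = Mh * e2 := mul_one _
    have habs : ‖F r‖ = r ^ (n - 1) * ((-Real.log r) ^ a) * ((1 - r ^ 2) ^ (-b)) *
        (|∏ j, hermiteH (α j) ((x j - r * y j) / Real.sqrt (1 - r ^ 2))| *
          Real.exp (-‖x - r • y‖ ^ 2 / (1 - r ^ 2))) := by
      simp only [hFdef]
      rw [Real.norm_eq_abs, abs_mul, abs_mul, abs_mul, abs_mul,
        abs_of_nonneg (pow_nonneg hr0.le (n - 1)),
        abs_of_nonneg (Real.rpow_nonneg hlog.le a),
        abs_of_nonneg (Real.rpow_nonneg hu.le (-b)),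
        abs_of_nonneg (le_of_lt (Real.exp_pos _))]
      ring
    have hg₁0 : 0 ≤ g₁ r := by
      rw [hg₁def]
      exact Set.indicator_nonneg
        (fun z hz => mul_nonneg (div_nonneg hB₁0 htn.le) (Real.rpow_nonneg (le_of_lt hz.1) _)) r
    have hg₂0 : 0 ≤ g₂ r := by
      rw [hg₂def]
      exact Set.indicator_nonneg (fun z _ => div_nonneg hB₂0 (pow_nonneg ht0.le _)) r
    have hg₃0 : 0 ≤ g₃ r := by
      rw [hg₃def]
      refine Set.indicator_nonneg (fun z hz => ?_) r
      exact mul_nonneg (div_nonneg hB₃0 (pow_nonneg ht0.le _))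
        (Real.rpow_nonneg (by linarith [hz.2, hm3le1]) _)
    rcases le_or_gt r 2⁻¹ with hhalf | hhalf
    · -- Region I
      have hmem₁ : r ∈ Set.Ioc (0:ℝ) 2⁻¹ := ⟨hr0, hhalf⟩
      have key : ‖F r‖ ≤ B₁ / t ^ n * r ^ (-(1/2) : ℝ) := by
        rw [habs]
        have hA : r ^ (n - 1) * ((-Real.log r) ^ a) ≤ 1 * (c₁ * r ^ (-(1/2) : ℝ)) :=
          mul_le_mul (pow_le_one₀ hr0.le (le_trans hhalf (by norm_num))) (hc₁ r hmem₁)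
            (Real.rpow_nonneg hlog.le _) (by norm_num)
        have hB : (1 - r ^ 2) ^ (-b) ≤ K34 := by
          have h34 : (3:ℝ)/4 ≤ 1 - r ^ 2 := by nlinarith [hmem₁.2]
          rw [hK34def]
          exact Real.rpow_le_rpow_of_nonpos (by norm_num) h34 (neg_nonpos.mpr hb0)
        have hc₁r : (0:ℝ) ≤ 1 * (c₁ * r ^ (-(1/2) : ℝ)) := by
          have := Real.rpow_nonneg hr0.le (-(1/2) : ℝ)
          nlinarith [hc₁0]
        calc r ^ (n - 1) * ((-Real.log r) ^ a) * ((1 - r ^ 2) ^ (-b)) *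
            (|∏ j, hermiteH (α j) ((x j - r * y j) / Real.sqrt (1 - r ^ 2))| *
              Real.exp (-‖x - r • y‖ ^ 2 / (1 - r ^ 2)))
            ≤ (1 * (c₁ * r ^ (-(1/2) : ℝ)) * K34) * (Mh * e2) := by
              apply mul_le_mul ?_ hWb hPE0
                (mul_nonneg hc₁r hK340)
              exact mul_le_mul hA hB (Real.rpow_nonneg hu.le _) hc₁r
          _ = (Mh * e2 * c₁ * K34) * r ^ (-(1/2) : ℝ) := by ring
          _ ≤ B₁ / t ^ n * r ^ (-(1/2) : ℝ) := by
              apply mul_le_mul_of_nonneg_right ?_ (Real.rpow_nonneg hr0.le _)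
              rw [le_div_iff₀ htn, hB₁def]
              calc Mh * e2 * c₁ * K34 * t ^ n ≤ Mh * e2 * c₁ * K34 * 2 ^ n := by
                    apply mul_le_mul_of_nonneg_left (pow_le_pow_left₀ ht0.le ht2 n)
                    exact mul_nonneg (mul_nonneg (mul_nonneg hMh0 he20) hc₁0) hK340
                _ = Mh * e2 * c₁ * K34 * 2 ^ n := rfl
      have hg₁v : g₁ r = B₁ / t ^ n * r ^ (-(1/2) : ℝ) := by
        rw [hg₁def]; exact Set.indicator_of_mem hmem₁ _
      have hfin1 : ‖F r‖ ≤ g₁ r := by rw [hg₁v]; exact key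
      linarith [hfin1, hg₂0, hg₃0]
    · rcases le_or_gt (1 - r ^ 2) (t ^ 2) with hut | hut
      · -- Region IIa
        have hmem₂ : r ∈ Set.Ioo m2 1 := by
          refine ⟨?_, hr1⟩
          rw [hm2def]
          apply max_lt hhalf
          nlinarith [hut, mul_pos hr0 (sub_pos.mpr hr1)]
        have key : ‖F r‖ ≤ B₂ / t ^ (n + 2) := by
          rw [habs]
          have hA : r ^ (n - 1) * ((-Real.log r) ^ a) ≤ 1 * (c₂ * (1 - r ^ 2) ^ a) :=
            mul_le_mul (pow_le_one₀ hr0.le hr1.le) (hc₂ r ⟨hhalf, hr1⟩)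
              (Real.rpow_nonneg hlog.le _) (by norm_num)
          have hc₂r : (0:ℝ) ≤ 1 * (c₂ * (1 - r ^ 2) ^ a) := by
            have := Real.rpow_nonneg hu.le a
            nlinarith [hc₂0]
          have hexp2 : Real.exp (-t ^ 2 / (2 * (1 - r ^ 2))) ≤
              ((n + 2).factorial : ℝ) * ((2 * (1 - r ^ 2)) ^ (n + 2) / t ^ (2 * (n + 2))) := by
            have hx0 : (0:ℝ) < t ^ 2 / (2 * (1 - r ^ 2)) := by positivity
            have hpf := Real.pow_div_factorial_le_exp (x := t ^ 2 / (2 * (1 - r ^ 2)))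
              (le_of_lt hx0) (n + 2)
            have heq : -t ^ 2 / (2 * (1 - r ^ 2)) = -(t ^ 2 / (2 * (1 - r ^ 2))) := by ring
            rw [heq, Real.exp_neg]
            have h2 : (Real.exp (t ^ 2 / (2 * (1 - r ^ 2))))⁻¹ ≤
                ((t ^ 2 / (2 * (1 - r ^ 2))) ^ (n + 2) / ((n + 2).factorial : ℝ))⁻¹ :=
              inv_anti₀ (by positivity) hpf
            refine h2.trans_eq ?_
            rw [div_pow, ← pow_mul]
            have hfac : ((n + 2).factorial : ℝ) ≠ 0 := by positivity
            field_simp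
          have hWexp : |∏ j, hermiteH (α j) ((x j - r * y j) / Real.sqrt (1 - r ^ 2))| *
              Real.exp (-‖x - r • y‖ ^ 2 / (1 - r ^ 2)) ≤
              Mh * e2 * (((n + 2).factorial : ℝ) *
                ((2 * (1 - r ^ 2)) ^ (n + 2) / t ^ (2 * (n + 2)))) :=
            hW.trans (mul_le_mul_of_nonneg_left hexp2 (mul_nonneg hMh0 he20))
          have hcomb : (1 - r ^ 2) ^ a * (1 - r ^ 2) ^ (-b) * (1 - r ^ 2) ^ (n + 2) =
              (1 - r ^ 2) ^ ((n:ℝ)/2 + 1) := by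
            rw [← Real.rpow_natCast (1 - r ^ 2) (n + 2), ← Real.rpow_add hu, ← Real.rpow_add hu]
            congr 1
            rw [hadef, hbdef]
            push_cast
            ring
          have h2b : ((t:ℝ) ^ 2) ^ ((n:ℝ)/2) = t ^ n := by
            rw [← Real.rpow_natCast t 2, ← Real.rpow_mul ht0.le]
            rw [show ((2:ℕ):ℝ) * ((n:ℝ)/2) = ((n:ℕ):ℝ) by push_cast; ring]
            exact Real.rpow_natCast t n
          have hfin : (1 - r ^ 2) ^ ((n:ℝ)/2 + 1) ≤ t ^ n * t ^ 2 := by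
            rw [Real.rpow_add hu, Real.rpow_one]
            calc (1 - r ^ 2) ^ ((n:ℝ)/2) * (1 - r ^ 2)
                ≤ (t ^ 2) ^ ((n:ℝ)/2) * t ^ 2 :=
                  mul_le_mul (Real.rpow_le_rpow hu.le hut (by positivity)) hut hu.le
                    (Real.rpow_nonneg (by positivity) _)
              _ = t ^ n * t ^ 2 := by rw [h2b]
          calc r ^ (n - 1) * ((-Real.log r) ^ a) * ((1 - r ^ 2) ^ (-b)) *
              (|∏ j, hermiteH (α j) ((x j - r * y j) / Real.sqrt (1 - r ^ 2))| *
                Real.exp (-‖x - r • y‖ ^ 2 / (1 - r ^ 2)))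
              ≤ (1 * (c₂ * (1 - r ^ 2) ^ a) * ((1 - r ^ 2) ^ (-b))) *
                (Mh * e2 * (((n + 2).factorial : ℝ) *
                  ((2 * (1 - r ^ 2)) ^ (n + 2) / t ^ (2 * (n + 2))))) := by
                apply mul_le_mul (mul_le_mul hA le_rfl (Real.rpow_nonneg hu.le _) hc₂r)
                  hWexp hPE0
                exact mul_nonneg hc₂r (Real.rpow_nonneg hu.le _)
            _ = (Mh * e2 * c₂ * ((n + 2).factorial : ℝ) * 2 ^ (n + 2)) *
                ((1 - r ^ 2) ^ a * (1 - r ^ 2) ^ (-b) * (1 - r ^ 2) ^ (n + 2)) /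
                t ^ (2 * (n + 2)) := by
                rw [mul_pow]
                ring
            _ = B₂ * ((1 - r ^ 2) ^ ((n:ℝ)/2 + 1)) / t ^ (2 * (n + 2)) := by
                rw [hcomb, hB₂def]
            _ ≤ B₂ * (t ^ n * t ^ 2) / t ^ (2 * (n + 2)) := by
                apply div_le_div_of_nonneg_right ?_ (by positivity)
                exact mul_le_mul_of_nonneg_left hfin hB₂0
            _ = B₂ / t ^ (n + 2) := by
                rw [show 2 * (n + 2) = (n + 2) + (n + 2) by ring, pow_add, ← pow_add]
                field_simp
        have hg₂v : g₂ r = B₂ / t ^ (n + 2) := by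
          rw [hg₂def]; exact Set.indicator_of_mem hmem₂ _
        have hfin2 : ‖F r‖ ≤ g₂ r := by rw [hg₂v]; exact key
        linarith [hfin2, hg₁0, hg₃0]
      · -- Region IIb
        have hmem₃ : r ∈ Set.Ioo (2⁻¹:ℝ) m3 := by
          refine ⟨hhalf, ?_⟩
          have h1 : t ^ 2 < 2 * (1 - r) := by nlinarith
          have h2 : r < 1 - t ^ 2 / 2 := by linarith
          exact lt_of_lt_of_le h2 (by rw [hm3def]; exact le_max_right _ _)
        have key : ‖F r‖ ≤ B₃ / t ^ (n - 1) * (1 - r) ^ (-(3/2) : ℝ) := by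
          rw [habs]
          have hA : r ^ (n - 1) * ((-Real.log r) ^ a) ≤ 1 * (c₂ * (1 - r ^ 2) ^ a) :=
            mul_le_mul (pow_le_one₀ hr0.le hr1.le) (hc₂ r ⟨hhalf, hr1⟩)
              (Real.rpow_nonneg hlog.le _) (by norm_num)
          have hc₂r : (0:ℝ) ≤ 1 * (c₂ * (1 - r ^ 2) ^ a) := by
            have := Real.rpow_nonneg hu.le a
            nlinarith [hc₂0]
          have hn1 : (1:ℝ) ≤ (n:ℝ) := by exact_mod_cast hn
          have hcomb : (1 - r ^ 2) ^ a * (1 - r ^ 2) ^ (-b) =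
              (1 - r ^ 2) ^ (-(((n:ℝ) - 1)/2)) * (1 - r ^ 2) ^ (-(3/2) : ℝ) := by
            rw [← Real.rpow_add hu, ← Real.rpow_add hu]
            congr 1
            rw [hadef, hbdef]
            ring
          have ht2pos : (0:ℝ) < t ^ 2 := by positivity
          have h1rpos : (0:ℝ) < 1 - r := by linarith
          have h1rle : 1 - r ≤ 1 - r ^ 2 := by nlinarith
          have hs1 : (1 - r ^ 2) ^ (-(((n:ℝ) - 1)/2)) ≤ (t ^ 2) ^ (-(((n:ℝ) - 1)/2)) :=
            Real.rpow_le_rpow_of_nonpos ht2pos hut.le (neg_nonpos.mpr (by linarith))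
          have hs2 : (1 - r ^ 2) ^ (-(3/2) : ℝ) ≤ (1 - r) ^ (-(3/2) : ℝ) :=
            Real.rpow_le_rpow_of_nonpos h1rpos h1rle (by norm_num)
          have hsplit : (1 - r ^ 2) ^ (-(((n:ℝ) - 1)/2)) * (1 - r ^ 2) ^ (-(3/2) : ℝ) ≤
              ((t ^ 2) ^ (-(((n:ℝ) - 1)/2))) * ((1 - r) ^ (-(3/2) : ℝ)) :=
            mul_le_mul hs1 hs2 (Real.rpow_nonneg hu.le _)
              (Real.rpow_nonneg (le_of_lt ht2pos) _)
          have h2b : ((t:ℝ) ^ 2) ^ (-(((n:ℝ) - 1)/2)) = (t ^ (n - 1))⁻¹ := by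
            rw [← Real.rpow_natCast t 2, ← Real.rpow_mul ht0.le]
            rw [show ((2:ℕ):ℝ) * (-(((n:ℝ) - 1)/2)) = -((n:ℝ) - 1) by push_cast; ring]
            rw [Real.rpow_neg ht0.le]
            congr 1
            rw [show ((n:ℝ) - 1) = ((n - 1 : ℕ):ℝ) by rw [Nat.cast_sub hn]; norm_num]
            exact Real.rpow_natCast t (n - 1)
          calc r ^ (n - 1) * ((-Real.log r) ^ a) * ((1 - r ^ 2) ^ (-b)) *
              (|∏ j, hermiteH (α j) ((x j - r * y j) / Real.sqrt (1 - r ^ 2))| *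
                Real.exp (-‖x - r • y‖ ^ 2 / (1 - r ^ 2)))
              ≤ (1 * (c₂ * (1 - r ^ 2) ^ a) * ((1 - r ^ 2) ^ (-b))) * (Mh * e2) := by
                apply mul_le_mul (mul_le_mul hA le_rfl (Real.rpow_nonneg hu.le _) hc₂r)
                  hWb hPE0
                exact mul_nonneg hc₂r (Real.rpow_nonneg hu.le _)
            _ = B₃ * ((1 - r ^ 2) ^ a * (1 - r ^ 2) ^ (-b)) := by rw [hB₃def]; ring
            _ = B₃ * ((1 - r ^ 2) ^ (-(((n:ℝ) - 1)/2)) * (1 - r ^ 2) ^ (-(3/2) : ℝ)) := by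
                rw [hcomb]
            _ ≤ B₃ * (((t ^ 2) ^ (-(((n:ℝ) - 1)/2))) * ((1 - r) ^ (-(3/2) : ℝ))) :=
                mul_le_mul_of_nonneg_left hsplit hB₃0
            _ = B₃ / t ^ (n - 1) * (1 - r) ^ (-(3/2) : ℝ) := by
                rw [h2b]
                ring
        have hg₃v : g₃ r = B₃ / t ^ (n - 1) * (1 - r) ^ (-(3/2) : ℝ) := by
          rw [hg₃def]; exact Set.indicator_of_mem hmem₃ _
        have hfin3 : ‖F r‖ ≤ g₃ r := by rw [hg₃v]; exact key
        linarith [hfin3, hg₁0, hg₂0]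
  have hint₁ : Integrable g₁ volume := by
    rw [hg₁def]
    apply (integrable_indicator_iff measurableSet_Ioc).2
    have h := (intervalIntegral.intervalIntegrable_rpow' (a := 0) (b := 2⁻¹)
      (by norm_num : (-1:ℝ) < -(1/2))).const_mul (B₁ / t ^ n)
    exact (intervalIntegrable_iff_integrableOn_Ioc_of_le (by norm_num)).1 h
  have hint₂ : Integrable g₂ volume := by
    rw [hg₂def]
    exact (integrable_indicator_iff measurableSet_Ioo).2
      (integrableOn_const measure_Ioo_lt_top.ne)
  have hm3case : m3 ≤ 2⁻¹ ∨ ((2⁻¹:ℝ) < 1 - t ^ 2 / 2 ∧ m3 = 1 - t ^ 2 / 2 ∧ 1 - m3 = t ^ 2 / 2) := by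
    rcases le_or_gt m3 2⁻¹ with hcase | hcase
    · exact Or.inl hcase
    · have hz : (2⁻¹:ℝ) < 1 - t ^ 2 / 2 := by
        by_contra hcon
        push_neg at hcon
        rw [hm3def] at hcase
        exact absurd (max_le (le_refl _) hcon) (not_le.mpr hcase)
      have hm3eq : m3 = 1 - t ^ 2 / 2 := by rw [hm3def]; exact max_eq_right (le_of_lt hz)
      exact Or.inr ⟨hz, hm3eq, by rw [hm3eq]; ring⟩
  have hint₃ : Integrable g₃ volume := by
    rcases hm3case with hcase | ⟨hz, hm3eq, h1m3⟩
    · rw [hg₃def, Set.Ioo_eq_empty (not_lt.mpr hcase)]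
      simp
    · have hcase : (2⁻¹:ℝ) < m3 := by rw [hm3eq]; exact hz
      rw [hg₃def]
      apply (integrable_indicator_iff measurableSet_Ioo).2
      have hbase : IntervalIntegrable (fun s : ℝ => s ^ (-(3/2) : ℝ)) volume 2⁻¹ (1 - m3) := by
        apply intervalIntegral.intervalIntegrable_rpow (Or.inr ?_)
        apply Set.notMem_uIcc_of_lt (by norm_num)
        rw [h1m3]; positivity
      have hcomp := hbase.comp_sub_left 1
      have e1 : (1:ℝ) - 2⁻¹ = 2⁻¹ := by norm_num
      have e2' : (1:ℝ) - (1 - m3) = m3 := by ring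
      rw [e1, e2'] at hcomp
      have hfin := hcomp.const_mul (B₃ / t ^ (n - 1))
      exact ((intervalIntegrable_iff_integrableOn_Ioc_of_le (le_of_lt hcase)).1 hfin).mono_set
        Set.Ioo_subset_Ioc_self
  have hI₁ : (∫ r in Set.Ioo (0:ℝ) 1, g₁ r) ≤ 2 * (B₁ / t ^ n) := by
    rw [hg₁def, setIntegral_indicator measurableSet_Ioc]
    have hinter : Set.Ioo (0:ℝ) 1 ∩ Set.Ioc 0 2⁻¹ = Set.Ioc (0:ℝ) 2⁻¹ :=
      Set.inter_eq_self_of_subset_right (fun z hz => ⟨hz.1, lt_of_le_of_lt hz.2 (by norm_num)⟩)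
    rw [hinter, MeasureTheory.integral_const_mul]
    have hval : (∫ r in Set.Ioc (0:ℝ) 2⁻¹, r ^ (-(1/2):ℝ)) ≤ 2 := by
      rw [← intervalIntegral.integral_of_le (by norm_num : (0:ℝ) ≤ 2⁻¹),
        integral_rpow (Or.inl (by norm_num)),
        Real.zero_rpow (by norm_num : (-(1/2:ℝ) + 1) ≠ 0), sub_zero]
      have h1 : ((2⁻¹:ℝ)) ^ (-(1/2:ℝ) + 1) ≤ 1 :=
        Real.rpow_le_one (by norm_num) (by norm_num) (by norm_num)
      rw [div_le_iff₀ (by norm_num : (0:ℝ) < -(1/2) + 1)]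
      linarith
    calc B₁ / t ^ n * (∫ r in Set.Ioc (0:ℝ) 2⁻¹, r ^ (-(1/2):ℝ))
        ≤ B₁ / t ^ n * 2 := mul_le_mul_of_nonneg_left hval (div_nonneg hB₁0 htn.le)
      _ = 2 * (B₁ / t ^ n) := by ring
  have hI₂ : (∫ r in Set.Ioo (0:ℝ) 1, g₂ r) ≤ B₂ / t ^ n := by
    rw [hg₂def, setIntegral_indicator measurableSet_Ioo, setIntegral_const, smul_eq_mul]
    have hmeas : (volume (Set.Ioo (0:ℝ) 1 ∩ Set.Ioo m2 1)).toReal ≤ t ^ 2 := by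
      apply ENNReal.toReal_le_of_le_ofReal (sq_nonneg t)
      calc volume (Set.Ioo (0:ℝ) 1 ∩ Set.Ioo m2 1) ≤ volume (Set.Ioo m2 1) :=
            measure_mono Set.inter_subset_right
        _ = ENNReal.ofReal (1 - m2) := Real.volume_Ioo
        _ ≤ ENNReal.ofReal (t ^ 2) := ENNReal.ofReal_le_ofReal
            (by rw [hm2def]; linarith [le_max_right (2⁻¹:ℝ) (1 - t ^ 2)])
    calc (volume (Set.Ioo (0:ℝ) 1 ∩ Set.Ioo m2 1)).toReal * (B₂ / t ^ (n + 2))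
        ≤ t ^ 2 * (B₂ / t ^ (n + 2)) :=
          mul_le_mul_of_nonneg_right hmeas (div_nonneg hB₂0 (pow_nonneg ht0.le _))
      _ = B₂ / t ^ n := by
          rw [pow_add]
          field_simp
  have hI₃ : (∫ r in Set.Ioo (0:ℝ) 1, g₃ r) ≤ 4 * (B₃ / t ^ n) := by
    have hpow : t ^ (n - 1) * t = t ^ n := by
      rw [← pow_succ, Nat.sub_add_cancel hn]
    rcases hm3case with hcase | ⟨hz, hm3eq, h1m3⟩
    · rw [hg₃def, Set.Ioo_eq_empty (not_lt.mpr hcase)]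
      simp only [Set.indicator_empty]
      rw [MeasureTheory.integral_zero]
      exact mul_nonneg (by norm_num) (div_nonneg hB₃0 htn.le)
    · have hcase : (2⁻¹:ℝ) < m3 := by rw [hm3eq]; exact hz
      rw [hg₃def, setIntegral_indicator measurableSet_Ioo]
      have hinter : Set.Ioo (0:ℝ) 1 ∩ Set.Ioo 2⁻¹ m3 = Set.Ioo (2⁻¹:ℝ) m3 :=
        Set.inter_eq_self_of_subset_right
          (fun z hz' => ⟨lt_trans (by norm_num) hz'.1, lt_of_lt_of_le hz'.2 hm3le1⟩)
      rw [hinter, MeasureTheory.integral_const_mul]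
      have hJ : (∫ r in Set.Ioo (2⁻¹:ℝ) m3, (1 - r) ^ (-(3/2):ℝ)) ≤ 4 / t := by
        rw [← integral_Ioc_eq_integral_Ioo, ← intervalIntegral.integral_of_le (le_of_lt hcase)]
        have hcs : (∫ r in (2⁻¹:ℝ)..m3, (1 - r) ^ (-(3/2):ℝ))
            = ∫ s in (1 - m3)..(1 - 2⁻¹), s ^ (-(3/2):ℝ) :=
          intervalIntegral.integral_comp_sub_left (fun s => s ^ (-(3/2):ℝ)) 1
        have h0mem : (0:ℝ) ∉ Set.uIcc (1 - m3) ((1:ℝ) - 2⁻¹) :=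
          Set.notMem_uIcc_of_lt (by rw [h1m3]; positivity) (by norm_num)
        rw [hcs, integral_rpow (Or.inr ⟨by norm_num, h0mem⟩)]
        have hA0 : (0:ℝ) ≤ ((1:ℝ) - 2⁻¹) ^ (-(3/2)+1 : ℝ) := Real.rpow_nonneg (by norm_num) _
        have hBv : ((1:ℝ) - m3) ^ (-(3/2)+1 : ℝ) ≤ 2 / t := by
          rw [h1m3]
          have hexpo : (-(3/2)+1 : ℝ) = -(1/2) := by norm_num
          rw [hexpo, Real.rpow_neg (by positivity)]
          have hsq : (t ^ 2 / 2) ^ ((1/2):ℝ) = Real.sqrt (t ^ 2 / 2) :=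
            (Real.sqrt_eq_rpow _).symm
          have hge : t / 2 ≤ Real.sqrt (t ^ 2 / 2) := by
            have h1 : Real.sqrt ((t/2)^2) ≤ Real.sqrt (t ^ 2 / 2) :=
              Real.sqrt_le_sqrt (by nlinarith)
            rwa [Real.sqrt_sq (by positivity)] at h1
          rw [hsq, show (2:ℝ)/t = (t/2)⁻¹ by rw [inv_div]]
          exact inv_anti₀ (by positivity) hge
        rw [div_le_iff_of_neg (by norm_num : (-(3/2)+1:ℝ) < 0)]
        have hlin : 4 / t * (-(3/2)+1:ℝ) = -(2/t) := by ring
        rw [hlin]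
        linarith [hA0, hBv]
      calc B₃ / t ^ (n - 1) * (∫ r in Set.Ioo (2⁻¹:ℝ) m3, (1 - r) ^ (-(3/2):ℝ))
          ≤ B₃ / t ^ (n - 1) * (4 / t) :=
            mul_le_mul_of_nonneg_left hJ (div_nonneg hB₃0 (pow_nonneg ht0.le _))
        _ = 4 * (B₃ / t ^ n) := by
            rw [div_mul_div_comm, hpow]; ring
  calc |∫ r in Set.Ioo (0:ℝ) 1, F r| ≤ ∫ r in Set.Ioo (0:ℝ) 1, ‖F r‖ := by
        rw [← Real.norm_eq_abs]
        exact norm_integral_le_integral_norm F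
    _ ≤ ∫ r in Set.Ioo (0:ℝ) 1, (g₁ r + g₂ r + g₃ r) := by
        apply integral_mono_of_nonneg (ae_of_all _ fun r => norm_nonneg _)
        · exact ((hint₁.add hint₂).add hint₃).integrableOn
        · exact (ae_restrict_iff' measurableSet_Ioo).mpr (ae_of_all _ hpt)
    _ = (∫ r in Set.Ioo (0:ℝ) 1, g₁ r) + (∫ r in Set.Ioo (0:ℝ) 1, g₂ r)
        + (∫ r in Set.Ioo (0:ℝ) 1, g₃ r) := by
        have hadd12 : Integrable (fun r => g₁ r + g₂ r) (volume.restrict (Set.Ioo (0:ℝ) 1)) :=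
          (hint₁.integrableOn).add (hint₂.integrableOn)
        rw [integral_add hadd12 hint₃.integrableOn,
          integral_add hint₁.integrableOn hint₂.integrableOn]
    _ ≤ 2 * (B₁ / t ^ n) + B₂ / t ^ n + 4 * (B₃ / t ^ n) :=
        add_le_add (add_le_add hI₁ hI₂) hI₃
    _ = (2 * B₁ + B₂ + 4 * B₃) / t ^ n := by ring

/-- size estimate for the Riesz kernel in the local region:
|K_α(x,y)| ≤ C|x−y|⁻ⁿ on N₂. -/
theorem riesz_kernel_size_estimate (n : ℕ) (hn : 1 ≤ n) (α : Fin n → ℕ) (hα : α ≠ 0) :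
    ∃ C : ℝ, ∀ x y : EuclideanSpace ℝ (Fin n), (x, y) ∈ Nset n 2 → x ≠ y →
      |rieszKernel α x y| ≤ C / ‖x - y‖ ^ n := by
  have hN1 : 1 ≤ ∑ j, α j := by
    obtain ⟨j0, hj0⟩ := Function.ne_iff.mp hα
    have h1 : 1 ≤ α j0 := Nat.one_le_iff_ne_zero.mpr (by simpa using hj0)
    exact le_trans h1 (Finset.single_le_sum (fun j _ => Nat.zero_le _) (Finset.mem_univ j0))
  obtain ⟨D, hD⟩ := integral_bound hn α hN1
  refine ⟨|((-1 : ℝ) ^ (∑ j, α j) /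
      (Real.pi ^ ((n : ℝ) / 2) * Real.Gamma ((∑ j, α j : ℕ) / 2 : ℝ)))| * D,
    fun x y hmem hxy => ?_⟩
  have hmem' : ‖x - y‖ ≤ 2 / (1 + ‖x‖ + ‖y‖) := hmem
  rw [rieszKernel, abs_mul, mul_div_assoc]
  exact mul_le_mul_of_nonneg_left (hD x y hmem' hxy) (abs_nonneg _)
end

section
/- Let n ≥ 1 and a ∈ ℕ. There is a constant C (depending only on n and a) such that for all x ∈ ℝ^n with x ≠ 0 and all y ∈ ℝ^n with r_0 ≤ 1/3 or r_0 ≥ 2, where r_0 = ⟨x,y⟩/|x|^2, one has ∫_{1/2}^1 |x−ry|^a (1−r)^{−(n+a+2)/2} e^{−|rx−y|^2/(1−r^2)} dr ≤ C |x|^{−n}. -/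
open MeasureTheory Real Filter Set

set_option maxHeartbeats 1000000
section AuxEstimate

lemma keyA_deriv (b : ℝ) (r : ℝ) (hr : r ∈ Ioo (1/2:ℝ) 1) :
    HasDerivWithinAt (fun t => b / (1 - t)) (b / (1 - r)^2) (Ioo (1/2:ℝ) 1) r := by
  have h1 : (1:ℝ) - r ≠ 0 := by rcases hr with ⟨_, h⟩; intro h0; nlinarith
  have : HasDerivAt (fun t : ℝ => b / (1 - t)) ((0 * (1-r) - b * (0 - 1)) / (1-r)^2) r :=
    (hasDerivAt_const r b).div ((hasDerivAt_const r (1:ℝ)).sub (hasDerivAt_id r)) h1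
  simpa using this.hasDerivWithinAt

lemma keyA_image (b : ℝ) (hb : 0 < b) :
    (fun t => b / (1 - t)) '' (Ioo (1/2:ℝ) 1) = Ioi (2*b) := by
  ext u
  constructor
  · rintro ⟨r, ⟨h1, h2⟩, rfl⟩
    have h3 : (0:ℝ) < 1 - r := by linarith
    have h5 : 1 - r < 1/2 := by linarith
    have : b / (1 - r) > b / (1/2) := div_lt_div_of_pos_left hb h3 h5
    simp only [mem_Ioi]
    rw [div_div_eq_mul_div, mul_comm] at this
    linarith [this]
  · intro hu
    simp only [mem_Ioi] at hu
    have hu0 : 0 < u := by linarith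
    refine ⟨1 - b/u, ⟨?_, ?_⟩, ?_⟩
    · have : b/u < 1/2 := by rw [div_lt_iff₀ hu0]; linarith
      linarith
    · have : 0 < b/u := by positivity
      linarith
    · show b / (1 - (1 - b/u)) = u; rw [sub_sub_cancel]; field_simp

lemma keyA_inj (b : ℝ) (hb : 0 < b) : InjOn (fun t => b / (1 - t)) (Ioo (1/2:ℝ) 1) := by
  intro s hs t ht h
  simp only at h
  have hs1 : (1:ℝ) - s ≠ 0 := by rcases hs with ⟨_, h2⟩; intro h0; nlinarith
  have ht1 : (1:ℝ) - t ≠ 0 := by rcases ht with ⟨_, h2⟩; intro h0; nlinarith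
  field_simp at h
  linarith

lemma keyA_eq (p b : ℝ) (hb : 0 < b) (r : ℝ) (hr : r ∈ Ioo (1/2:ℝ) 1) :
    |b / (1 - r)^2| • (b ^ (1-p) * ((b/(1-r)) ^ (p-2) * Real.exp (-(b/(1-r))))) =
      (1-r) ^ (-p) * Real.exp (-b/(1-r)) := by
  have h3 : (0:ℝ) < 1 - r := by rcases hr with ⟨_, h⟩; linarith
  rw [smul_eq_mul, abs_of_pos (by positivity)]
  have h2 : (b/(1-r))^(p-2) = b^(p-2) * (1-r)^(2-p) := by
    rw [Real.div_rpow hb.le h3.le, div_eq_mul_inv, ← Real.rpow_neg h3.le, neg_sub]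
  have h4 : ((1-r):ℝ)^(2:ℕ) = (1-r)^((2:ℕ):ℝ) := (Real.rpow_natCast _ 2).symm
  rw [h2, h4, div_eq_mul_inv, ← Real.rpow_neg h3.le, neg_div]
  have : b * (1 - r) ^ (-((2:ℕ):ℝ)) * (b ^ (1 - p) * (b ^ (p - 2) * (1 - r) ^ (2 - p) * Real.exp (-(b / (1 - r)))))
      = (b ^ (1:ℝ) * b ^ (1-p) * b ^ (p-2)) * ((1-r) ^ (-((2:ℕ):ℝ)) * (1-r) ^ (2-p)) * Real.exp (-(b/(1-r))) := by
    rw [Real.rpow_one]; ring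
  rw [this, ← Real.rpow_add hb, ← Real.rpow_add hb, ← Real.rpow_add h3]
  norm_num
  rw [show (1:ℝ) + (1-p) + (p-2) = 0 by ring, show (-2:ℝ) + (2-p) = -p by ring, Real.rpow_zero, one_mul]

lemma keyA_gammaInt (p b : ℝ) (hp : 1 < p) (hb : 0 < b) :
    IntegrableOn (fun u => b ^ (1-p) * ((u:ℝ) ^ (p-2) * Real.exp (-u))) (Ioi (2*b)) ∧
    (∫ u in Ioi (2*b), b ^ (1-p) * ((u:ℝ) ^ (p-2) * Real.exp (-u)))
      ≤ Real.Gamma (p-1) * b ^ (1-p) := by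
  have hconv : IntegrableOn (fun u : ℝ => Real.exp (-u) * u ^ (p-1-1)) (Ioi 0) :=
    Real.GammaIntegral_convergent (by linarith)
  have hcongr : ∀ u : ℝ, Real.exp (-u) * u ^ (p-1-1) = u ^ (p-2) * Real.exp (-u) := by
    intro u; rw [show p-1-1 = p-2 by ring]; ring
  have hconv2 : IntegrableOn (fun u : ℝ => u ^ (p-2) * Real.exp (-u)) (Ioi 0) := by
    refine hconv.congr_fun (fun u _ => hcongr u) measurableSet_Ioi
  have hsub : Ioi (2*b) ⊆ Ioi (0:ℝ) := Ioi_subset_Ioi (by positivity)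
  constructor
  · exact ((hconv2.mono_set hsub).const_mul _)
  · rw [integral_const_mul]
    have h1 : (∫ u in Ioi (2*b), (u:ℝ) ^ (p-2) * Real.exp (-u))
        ≤ ∫ u in Ioi (0:ℝ), (u:ℝ) ^ (p-2) * Real.exp (-u) := by
      refine setIntegral_mono_set hconv2 ?_ (HasSubset.Subset.eventuallyLE hsub)
      filter_upwards [self_mem_ae_restrict measurableSet_Ioi] with u hu
      have : (0:ℝ) < u := hu
      positivity
    have h2 : (∫ u in Ioi (0:ℝ), (u:ℝ) ^ (p-2) * Real.exp (-u)) = Real.Gamma (p-1) := by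
      rw [Real.Gamma_eq_integral (by linarith : (0:ℝ) < p - 1)]
      exact setIntegral_congr_fun measurableSet_Ioi (fun u _ => (hcongr u).symm)
    have hbp : (0:ℝ) ≤ b ^ (1-p) := (Real.rpow_pos_of_pos hb _).le
    calc b ^ (1-p) * (∫ u in Ioi (2*b), (u:ℝ) ^ (p-2) * Real.exp (-u))
        ≤ b ^ (1-p) * Real.Gamma (p-1) := by
          apply mul_le_mul_of_nonneg_left _ hbp
          rw [← h2]; exact h1
      _ = Real.Gamma (p-1) * b ^ (1-p) := mul_comm _ _

lemma keyA (p b : ℝ) (hp : 1 < p) (hb : 0 < b) :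
    IntegrableOn (fun r => (1-r) ^ (-p) * Real.exp (-b/(1-r))) (Ioo (1/2:ℝ) 1) ∧
    (∫ r in Ioo (1/2:ℝ) 1, (1-r) ^ (-p) * Real.exp (-b/(1-r)))
      ≤ Real.Gamma (p-1) * b ^ (1-p) := by
  have hderiv := keyA_deriv b
  have himg := keyA_image b hb
  have hinj := keyA_inj b hb
  have hint := (integrableOn_image_iff_integrableOn_abs_deriv_smul measurableSet_Ioo
    hderiv hinj (fun u => b ^ (1-p) * ((u:ℝ) ^ (p-2) * Real.exp (-u))))
  have heq := integral_image_eq_integral_abs_deriv_smul measurableSet_Ioo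
    hderiv hinj (fun u => b ^ (1-p) * ((u:ℝ) ^ (p-2) * Real.exp (-u)))
  rw [himg] at hint heq
  obtain ⟨hI, hG⟩ := keyA_gammaInt p b hp hb
  have hcong : ∀ r ∈ Ioo (1/2:ℝ) 1,
      |b / (1 - r)^2| • (b ^ (1-p) * ((b/(1-r)) ^ (p-2) * Real.exp (-(b/(1-r))))) =
      (1-r) ^ (-p) * Real.exp (-b/(1-r)) := fun r hr => keyA_eq p b hb r hr
  constructor
  · refine (hint.mp hI).congr_fun (fun r hr => hcong r hr) measurableSet_Ioo
  · calc (∫ r in Ioo (1/2:ℝ) 1, (1-r) ^ (-p) * Real.exp (-b/(1-r)))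
        = ∫ r in Ioo (1/2:ℝ) 1,
            |b / (1 - r)^2| • (b ^ (1-p) * ((b/(1-r)) ^ (p-2) * Real.exp (-(b/(1-r))))) :=
          (setIntegral_congr_fun measurableSet_Ioo (fun r hr => (hcong r hr).symm))
      _ = ∫ u in Ioi (2*b), b ^ (1-p) * ((u:ℝ) ^ (p-2) * Real.exp (-u)) := heq.symm
      _ ≤ Real.Gamma (p-1) * b ^ (1-p) := hG

set_option maxHeartbeats 1000000

lemma aux_pow_exp (a : ℕ) {s : ℝ} (hs : 0 ≤ s) :
    s ^ ((a:ℝ)/2) * Real.exp (-s) ≤ 1 + (Nat.factorial a : ℝ) := by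
  have hsa : s ^ a ≤ (Nat.factorial a : ℝ) * Real.exp s := by
    have h1 : s ^ a / (Nat.factorial a : ℝ) ≤ Real.exp s := by
      calc s ^ a / (Nat.factorial a : ℝ) ≤ ∑ i ∈ Finset.range (a+1), s ^ i / (Nat.factorial i : ℝ) := by
            refine Finset.single_le_sum (f := fun i => s ^ i / (Nat.factorial i : ℝ)) ?_ ?_
            · intro i _; positivity
            · exact Finset.self_mem_range_succ a
        _ ≤ Real.exp s := Real.sum_le_exp_of_nonneg hs _
    have ha : (0:ℝ) < (Nat.factorial a : ℝ) := by positivity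
    rw [div_le_iff₀ ha] at h1; linarith [h1]
  have h2 : s ^ ((a:ℝ)/2) ≤ 1 + s ^ a := by
    rcases le_total s 1 with h | h
    · have : s ^ ((a:ℝ)/2) ≤ 1 := Real.rpow_le_one hs h (by positivity)
      have : (0:ℝ) ≤ s ^ a := by positivity
      linarith [Real.rpow_le_one hs h (by positivity : (0:ℝ) ≤ (a:ℝ)/2)]
    · have h3 : s ^ ((a:ℝ)/2) ≤ s ^ ((a:ℝ)) :=
        Real.rpow_le_rpow_of_exponent_le h (by linarith [Nat.cast_nonneg (α := ℝ) a] : (a:ℝ)/2 ≤ (a:ℝ))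
      rw [Real.rpow_natCast] at h3
      linarith
  have hexp : Real.exp (-s) ≤ 1 := Real.exp_le_one_iff.mpr (by linarith)
  have hexp0 : 0 < Real.exp (-s) := Real.exp_pos _
  calc s ^ ((a:ℝ)/2) * Real.exp (-s) ≤ (1 + s^a) * Real.exp (-s) := by
        apply mul_le_mul_of_nonneg_right h2 hexp0.le
    _ = Real.exp (-s) + s^a * Real.exp (-s) := by ring
    _ ≤ 1 + (Nat.factorial a : ℝ) := by
        have : s^a * Real.exp (-s) ≤ (Nat.factorial a : ℝ) := by
          rw [Real.exp_neg]
          rw [mul_inv_le_iff₀ (Real.exp_pos s)]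
          linarith
        linarith

lemma pointwise_bound (n a : ℕ) (x y : EuclideanSpace ℝ (Fin n)) (hx : x ≠ 0)
    (hr0 : (inner ℝ y x : ℝ) / ‖x‖ ^ 2 ≤ 1 / 3 ∨ 2 ≤ (inner ℝ y x : ℝ) / ‖x‖ ^ 2)
    (r : ℝ) (hr : r ∈ Ioo (1/2:ℝ) 1) :
    ‖x - r • y‖ ^ a * (1 - r) ^ (-(((n : ℝ) + a + 2) / 2)) *
        Real.exp (-‖r • x - y‖ ^ 2 / (1 - r ^ 2)) ≤
    ((648:ℝ) ^ ((a:ℝ)/2) * (1 + (Nat.factorial a : ℝ))) *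
      ((1 - r) ^ (-(((n : ℝ) + 2) / 2)) * Real.exp (-(‖x‖^2/288)/(1-r))) := by
  obtain ⟨hr1, hr2⟩ := hr
  have hN : (0:ℝ) < ‖x‖ := norm_pos_iff.mpr hx
  set N : ℝ := ‖x‖ with hNdef
  set r₀ : ℝ := (inner ℝ y x : ℝ) / N ^ 2 with hr0def
  set w : EuclideanSpace ℝ (Fin n) := y - r₀ • x with hwdef
  have hxw : (inner ℝ x w : ℝ) = 0 := by
    rw [hwdef, inner_sub_right, real_inner_smul_right, real_inner_comm y x,
      real_inner_self_eq_norm_sq]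
    field_simp [hr0def]
    rw [hr0def, ← hNdef, div_mul_cancel₀ _ (pow_ne_zero 2 hN.ne'), sub_self]
  have hwx : (inner ℝ w x : ℝ) = 0 := by rw [real_inner_comm]; exact hxw
  have h1r : (0:ℝ) < 1 - r := by linarith
  have h1r2 : (0:ℝ) < 1 - r^2 := by nlinarith
  have h1r2' : 1 - r^2 ≤ 2*(1-r) := by nlinarith
  -- D decomposition
  set D : ℝ := ‖r • x - y‖ ^ 2 with hDdef
  have hDeq : D = (r - r₀)^2 * N^2 + ‖w‖^2 := by
    have hv : r • x - y = (r - r₀) • x - w := by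
      rw [hwdef, sub_smul]; abel
    rw [hDdef, hv, norm_sub_sq_real, real_inner_smul_left, hxw, norm_smul,
      Real.norm_eq_abs, mul_pow, sq_abs]
    ring
  have hyeq : ‖y‖^2 = r₀^2 * N^2 + ‖w‖^2 := by
    have hv : y = r₀ • x + w := by rw [hwdef]; abel
    rw [hv, norm_add_sq_real, real_inner_smul_left, hxw, norm_smul,
      Real.norm_eq_abs, mul_pow, sq_abs]
    ring
  have hstep : 1/72 + r₀^2/8 ≤ (r - r₀)^2 := by
    rcases hr0 with h | h
    · nlinarith [mul_nonneg (by linarith : (0:ℝ) ≤ 1/3 - r₀) (by linarith : (0:ℝ) ≤ r - r₀)]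
    · nlinarith [mul_nonneg (by linarith : (0:ℝ) ≤ r₀ - 2) (by linarith : (0:ℝ) ≤ r₀ - r)]
  have hw0 : (0:ℝ) ≤ ‖w‖^2 := sq_nonneg _
  have hN2 : (0:ℝ) < N^2 := by positivity
  have hD1 : N^2/72 ≤ D := by nlinarith
  have hD2 : r₀^2 * N^2 ≤ 8 * D := by nlinarith
  have hD0 : (0:ℝ) ≤ D := sq_nonneg _
  -- E bound
  set E : ℝ := ‖x - r • y‖ with hEdef
  have hE0 : 0 ≤ E := norm_nonneg _
  have hEle : E ≤ N + ‖y‖ := by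
    calc E ≤ ‖x‖ + ‖r • y‖ := norm_sub_le _ _
      _ = N + |r| * ‖y‖ := by rw [norm_smul, Real.norm_eq_abs]
      _ ≤ N + 1 * ‖y‖ := by
          have : |r| ≤ 1 := by rw [abs_le]; constructor <;> linarith
          have := norm_nonneg y
          nlinarith
      _ = N + ‖y‖ := by ring
  have hE2 : E^2 ≤ 162 * D := by
    have h1 : E^2 ≤ (N + ‖y‖)^2 := by
      have := norm_nonneg y
      nlinarith
    have h2 : (N + ‖y‖)^2 ≤ 2*N^2 + 2*‖y‖^2 := by nlinarith [sq_nonneg (N - ‖y‖)]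
    nlinarith
  -- s
  set s : ℝ := D / (4*(1-r)) with hsdef
  have hs0 : 0 ≤ s := by positivity
  have hDs : D = 4*(1-r)*s := by rw [hsdef]; field_simp
  have hexp : Real.exp (-D/(1-r^2)) ≤ Real.exp (-s) * Real.exp (-s) := by
    rw [← Real.exp_add]
    apply Real.exp_le_exp.mpr
    have h1 : D/(2*(1-r)) ≤ D/(1-r^2) :=
      div_le_div_of_nonneg_left hD0 h1r2 h1r2'
    have h2 : s + s = D/(2*(1-r)) := by rw [hsdef]; field_simp; ring
    rw [neg_div]
    linarith
  -- E^a bound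
  set q : ℝ := (a:ℝ)/2 with hqdef
  have hq0 : 0 ≤ q := by positivity
  have hEa : E ^ a ≤ 648 ^ q * (1-r) ^ q * s ^ q := by
    have h1 : (E^2 : ℝ) ^ q = E ^ a := by
      rw [← Real.rpow_natCast E 2, ← Real.rpow_mul hE0, ← Real.rpow_natCast E a]
      congr 1
      push_cast [hqdef]; ring
    have h2 : (E^2 : ℝ) ^ q ≤ (648 * (1-r) * s) ^ q := by
      apply Real.rpow_le_rpow (sq_nonneg _) _ hq0
      rw [hDs] at hE2; linarith
    have h3 : (648 * (1-r) * s : ℝ) ^ q = 648 ^ q * (1-r) ^ q * s ^ q := by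
      rw [Real.mul_rpow (by positivity) hs0, Real.mul_rpow (by norm_num) h1r.le]
    rw [← h1, ← h3]; exact h2
  have hsq : s ^ q * Real.exp (-s) ≤ 1 + (Nat.factorial a : ℝ) := aux_pow_exp a hs0
  have hexp2 : Real.exp (-s) ≤ Real.exp (-(N^2/288)/(1-r)) := by
    apply Real.exp_le_exp.mpr
    rw [neg_div, neg_le_neg_iff]
    rw [hsdef]
    rw [div_le_div_iff₀ (by positivity) (by positivity)]
    nlinarith
  -- combine
  have hm : (1-r) ^ q * (1-r) ^ (-(((n : ℝ) + a + 2) / 2)) = (1-r) ^ (-(((n : ℝ) + 2) / 2)) := by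
    rw [← Real.rpow_add h1r]
    congr 1
    rw [hqdef]; ring
  have hrm0 : (0:ℝ) ≤ (1-r) ^ (-(((n : ℝ) + a + 2) / 2)) := Real.rpow_nonneg h1r.le _
  have hrp0 : (0:ℝ) ≤ (1-r) ^ (-(((n : ℝ) + 2) / 2)) := Real.rpow_nonneg h1r.le _
  calc E ^ a * (1 - r) ^ (-(((n : ℝ) + a + 2) / 2)) * Real.exp (-D / (1 - r^2))
      ≤ (648 ^ q * (1-r) ^ q * s ^ q) * (1 - r) ^ (-(((n : ℝ) + a + 2) / 2)) *
          (Real.exp (-s) * Real.exp (-s)) := by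
        have hEnn : (0:ℝ) ≤ 648 ^ q * (1-r) ^ q * s ^ q := by positivity
        apply mul_le_mul (mul_le_mul_of_nonneg_right hEa hrm0) hexp (Real.exp_pos _).le
        positivity
    _ = 648 ^ q * (s ^ q * Real.exp (-s)) * ((1-r) ^ q * (1 - r) ^ (-(((n : ℝ) + a + 2) / 2))) *
          Real.exp (-s) := by ring
    _ ≤ 648 ^ q * (1 + (Nat.factorial a : ℝ)) * ((1 - r) ^ (-(((n : ℝ) + 2) / 2))) *
          Real.exp (-(N^2/288)/(1-r)) := by
        rw [hm]
        have h648 : (0:ℝ) ≤ (648:ℝ) ^ q := by positivity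
        apply mul_le_mul _ hexp2 (Real.exp_pos _).le (by positivity)
        apply mul_le_mul_of_nonneg_right _ hrp0
        exact mul_le_mul_of_nonneg_left hsq h648
    _ = ((648:ℝ) ^ ((a:ℝ)/2) * (1 + (Nat.factorial a : ℝ))) *
          ((1 - r) ^ (-(((n : ℝ) + 2) / 2)) * Real.exp (-(N^2/288)/(1-r))) := by
        rw [hqdef]; ring

end AuxEstimate

/-- if r₀ = ⟨x,y⟩/|x|² satisfies r₀ ≤ 1/3 or r₀ ≥ 2, then
∫_{1/2}^1 |x−ry|^a (1−r)^{-(n+a+2)/2} e^{-|rx−y|²/(1−r²)} dr ≤ C|x|⁻ⁿ. -/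
theorem integral_estimate_r0_far (n : ℕ) (hn : 1 ≤ n) (a : ℕ) :
    ∃ C : ℝ, ∀ x y : EuclideanSpace ℝ (Fin n), x ≠ 0 →
      ((inner ℝ y x : ℝ) / ‖x‖ ^ 2 ≤ 1 / 3 ∨ 2 ≤ (inner ℝ y x : ℝ) / ‖x‖ ^ 2) →
      (∫ r in Set.Ioo (1 / 2 : ℝ) 1,
          ‖x - r • y‖ ^ a * (1 - r) ^ (-(((n : ℝ) + a + 2) / 2)) *
            Real.exp (-‖r • x - y‖ ^ 2 / (1 - r ^ 2))) ≤ C / ‖x‖ ^ n := by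
  set K : ℝ := (648:ℝ) ^ ((a:ℝ)/2) * (1 + (Nat.factorial a : ℝ)) with hKdef
  have hK0 : 0 < K := by positivity
  set p : ℝ := ((n:ℝ) + 2)/2 with hpdef
  have hp : 1 < p := by
    have : (1:ℝ) ≤ (n:ℝ) := by exact_mod_cast hn
    rw [hpdef]; linarith
  refine ⟨K * Real.Gamma (p - 1) * 288 ^ ((n:ℝ)/2), ?_⟩
  intro x y hx hr0
  have hN : (0:ℝ) < ‖x‖ := norm_pos_iff.mpr hx
  set b : ℝ := ‖x‖^2/288 with hbdef
  have hb : 0 < b := by positivity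
  obtain ⟨hint, hbound⟩ := keyA p b hp hb
  have hintK : IntegrableOn (fun r => K * ((1-r) ^ (-p) * Real.exp (-b/(1-r))))
      (Ioo (1/2:ℝ) 1) := hint.const_mul K
  have hmono : (∫ r in Set.Ioo (1 / 2 : ℝ) 1,
      ‖x - r • y‖ ^ a * (1 - r) ^ (-(((n : ℝ) + a + 2) / 2)) *
        Real.exp (-‖r • x - y‖ ^ 2 / (1 - r ^ 2))) ≤
      ∫ r in Set.Ioo (1 / 2 : ℝ) 1, K * ((1-r) ^ (-p) * Real.exp (-b/(1-r))) := by
    apply integral_mono_of_nonneg _ hintK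
    · filter_upwards [ae_restrict_mem measurableSet_Ioo] with r hr
      exact pointwise_bound n a x y hx hr0 r hr
    · filter_upwards [ae_restrict_mem measurableSet_Ioo] with r hr
      have h1r : (0:ℝ) ≤ 1 - r := by rcases hr with ⟨_, h⟩; linarith
      have := Real.rpow_nonneg h1r (-(((n : ℝ) + a + 2) / 2))
      positivity
  have hintval : (∫ r in Set.Ioo (1 / 2 : ℝ) 1, K * ((1-r) ^ (-p) * Real.exp (-b/(1-r))))
      ≤ K * (Real.Gamma (p-1) * b ^ (1-p)) := by
    rw [integral_const_mul]
    exact mul_le_mul_of_nonneg_left hbound hK0.le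
  have hbp : b ^ (1-p) = 288 ^ ((n:ℝ)/2) / ‖x‖ ^ n := by
    have h1 : (1:ℝ) - p = -((n:ℝ)/2) := by rw [hpdef]; ring
    rw [hbdef, h1, Real.div_rpow (by positivity) (by norm_num : (0:ℝ) ≤ 288),
      Real.rpow_neg (by positivity), Real.rpow_neg (by norm_num : (0:ℝ) ≤ 288)]
    have h2 : (‖x‖^2 : ℝ) ^ ((n:ℝ)/2) = ‖x‖ ^ n := by
      rw [← Real.rpow_natCast ‖x‖ 2, ← Real.rpow_mul hN.le, ← Real.rpow_natCast ‖x‖ n]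
      congr 1; push_cast; ring
    rw [h2]
    field_simp
  calc (∫ r in Set.Ioo (1 / 2 : ℝ) 1,
          ‖x - r • y‖ ^ a * (1 - r) ^ (-(((n : ℝ) + a + 2) / 2)) *
            Real.exp (-‖r • x - y‖ ^ 2 / (1 - r ^ 2)))
      ≤ K * (Real.Gamma (p-1) * b ^ (1-p)) := le_trans hmono hintval
    _ = K * Real.Gamma (p - 1) * 288 ^ ((n:ℝ)/2) / ‖x‖ ^ n := by
        rw [hbp]; ring
end

section
/- Let n ≥ 2 and let Ω be the set of pairs (x,y) ∈ ℝ^n×ℝ^n with x, y ≠ 0 satisfying: x_1/|x| > √3/2, y_1/|y| > 1/2, |x|·|x−y_x| ≥ 1, |x|/3 ≤ |y_x| < |x|, |y_⊥| ≤ |x|, θ(x,y) ≤ π/6, and |y_⊥|^2 |x| / |x−y_x| ≤ |x|^2/4. Then there is a constant c > 0 such that for every (x,y) ∈ Ω, c |x−y_x| ≤ |x| − |y| ≤ |x−y_x|; in particular |y| < |x| and |x| − |y| is comparable to |x−y_x| on Ω. -/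
open MeasureTheory Real Filter Set

lemma omega_arith (a P Q Y : ℝ) (ha : 0 < a) (h2 : a / 3 ≤ P) (h3 : P < a)
    (hQ2 : Q ^ 2 ≤ a * (a - P) / 4) (hY : 0 ≤ Y) (hpyth : Y ^ 2 = P ^ 2 + Q ^ 2) :
    5 / 8 * (a - P) ≤ a - Y ∧ a - Y ≤ a - P ∧ Y < a := by
  have hPy : P ≤ Y := by
    have hsq : P ^ 2 ≤ Y ^ 2 := by linarith [sq_nonneg Q]
    exact le_of_pow_le_pow_left₀ two_ne_zero hY hsq
  have hupper : Y ≤ (3 * a + 5 * P) / 8 := by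
    have hrhs : (0 : ℝ) ≤ (3 * a + 5 * P) / 8 := by linarith
    have hsq : Y ^ 2 ≤ ((3 * a + 5 * P) / 8) ^ 2 := by
      rw [hpyth]
      nlinarith [mul_nonneg (by linarith : (0:ℝ) ≤ a - P)
        (by linarith : (0:ℝ) ≤ 39 * P - 7 * a)]
    exact le_of_pow_le_pow_left₀ two_ne_zero hrhs hsq
  refine ⟨by linarith, by linarith, by linarith⟩

/-- on the region Ω, one has |x| − |y| ≈ |x − y_x|, and in particular |y| < |x|. -/
theorem omega_comparison (n : ℕ) (hn : 2 ≤ n) :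
    ∃ c : ℝ, 0 < c ∧ ∀ x y : EuclideanSpace ℝ (Fin n), x ≠ 0 → y ≠ 0 →
      Real.sqrt 3 / 2 < x ⟨0, by omega⟩ / ‖x‖ →
      1 / 2 < y ⟨0, by omega⟩ / ‖y‖ →
      1 ≤ ‖x‖ * ‖x - projPar x y‖ →
      ‖x‖ / 3 ≤ ‖projPar x y‖ → ‖projPar x y‖ < ‖x‖ →
      ‖y - projPar x y‖ ≤ ‖x‖ →
      InnerProductGeometry.angle x y ≤ Real.pi / 6 →
      ‖y - projPar x y‖ ^ 2 * ‖x‖ / ‖x - projPar x y‖ ≤ ‖x‖ ^ 2 / 4 →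
      c * ‖x - projPar x y‖ ≤ ‖x‖ - ‖y‖ ∧ ‖x‖ - ‖y‖ ≤ ‖x - projPar x y‖ ∧ ‖y‖ < ‖x‖ := by
  refine ⟨5/8, by norm_num, fun x y hx0 hy0 _ _ _ h2 h3 h4 hang h6 => ?_⟩
  have hx : (0:ℝ) < ‖x‖ := norm_pos_iff.mpr hx0
  have hy : (0:ℝ) < ‖y‖ := norm_pos_iff.mpr hy0
  set t : ℝ := (inner ℝ y x : ℝ) / ‖x‖ ^ 2 with ht
  -- inner positivity from angle
  have hipi : Real.pi / 6 < Real.pi / 2 := by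
    have := Real.pi_pos; linarith
  have hcos : 0 < Real.cos (InnerProductGeometry.angle x y) := by
    apply Real.cos_pos_of_mem_Ioo
    constructor
    · have := InnerProductGeometry.angle_nonneg x y
      have := Real.pi_pos; linarith
    · linarith [hang]
  have hinner : (0:ℝ) < (inner ℝ x y : ℝ) := by
    have hc := InnerProductGeometry.cos_angle x y
    have : (inner ℝ x y : ℝ) = Real.cos (InnerProductGeometry.angle x y) * (‖x‖ * ‖y‖) := by
      rw [hc]; field_simp
    rw [this]; positivity
  have hip : (0:ℝ) < (inner ℝ y x : ℝ) := by rwa [real_inner_comm]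
  have htpos : 0 < t := div_pos hip (by positivity)
  have hproj : projPar x y = t • x := rfl
  have hP : ‖projPar x y‖ = t * ‖x‖ := by
    rw [hproj, norm_smul, Real.norm_eq_abs, abs_of_pos htpos]
  have ht1 : t < 1 := by
    by_contra h
    push_neg at h
    have : ‖x‖ ≤ t * ‖x‖ := le_mul_of_one_le_left hx.le h
    rw [← hP] at this; linarith [h3]
  have hD : ‖x - projPar x y‖ = ‖x‖ - ‖projPar x y‖ := by
    rw [hP, hproj]
    have : x - t • x = (1 - t) • x := by rw [sub_smul, one_smul]
    rw [this, norm_smul, Real.norm_eq_abs, abs_of_pos (by linarith)]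
    ring
  -- Pythagoras
  have horth : (inner ℝ (projPar x y) (y - projPar x y) : ℝ) = 0 := by
    rw [hproj]
    rw [inner_sub_right, real_inner_smul_left, real_inner_smul_left, real_inner_smul_right,
      real_inner_self_eq_norm_sq, ht, real_inner_comm x y]
    field_simp
    ring
  have hpyth : ‖y‖ ^ 2 = ‖projPar x y‖ ^ 2 + ‖y - projPar x y‖ ^ 2 := by
    have hy' : y = projPar x y + (y - projPar x y) := by abel
    calc ‖y‖ ^ 2 = ‖projPar x y + (y - projPar x y)‖ ^ 2 := by rw [← hy']
    _ = ‖projPar x y‖ ^ 2 + 2 * (inner ℝ (projPar x y) (y - projPar x y) : ℝ)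
        + ‖y - projPar x y‖ ^ 2 := norm_add_sq_real _ _
    _ = ‖projPar x y‖ ^ 2 + ‖y - projPar x y‖ ^ 2 := by rw [horth]; ring
  set a := ‖x‖
  set P := ‖projPar x y‖
  set Q := ‖y - projPar x y‖
  have hDpos : (0:ℝ) < a - P := by linarith
  have hQ2 : Q ^ 2 ≤ a * (a - P) / 4 := by
    rw [hD] at h6
    have h6' : Q ^ 2 * a ≤ a ^ 2 / 4 * (a - P) := by
      have := (div_le_iff₀ hDpos).mp h6
      linarith
    nlinarith
  have hres := omega_arith a P Q ‖y‖ hx h2 h3 hQ2 hy.le hpyth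
  rw [hD]
  exact hres
end
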